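/- arXiv:2104.08609 — 3 statements merged into one kernel-verified Lean document; each statement's English description precedes it below -/
import Mathlib

section
/- Let μ be a Krull valuation on K̄[x] with K̄ algebraically closed, which is value-transcendental over K̄ (the quotient μK̄(x)/μK̄ is not torsion). Then there exist a ∈ K̄ and δ = μ(x−a) such that μ = μ_{a,δ}. -/
open Polynomial

variable {K : Type*} [Field K] {Γ : Type*} [AddCommGroup Γ] [LinearOrder Γ] [IsOrderedAddMonoid Γ]

/-- The `i`-th coefficient of the `q`-expansion of `f`. -/
noncomputable def qCoeff (q f : Polynomial K) (i : ℕ) : Polynomial K :=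
  f / q ^ i % q

/-- The truncation `ν_q` of `w` at `q` :
`ν_q(f) = min_i ν(f_i q^i)` over the `q`-expansion `f = Σ f_i q^i`. -/
noncomputable def trunc (w : Polynomial K → WithTop Γ) (q f : Polynomial K) : WithTop Γ :=
  (Finset.range (f.natDegree + 1)).inf fun i => w (qCoeff q f i * q ^ i)

/-- `b` is an admissible index in the definition of `ε(f)`. -/
def ValidIdx (w : Polynomial K → WithTop Γ) (f : Polynomial K) (b : ℕ) : Prop :=
  1 ≤ b ∧ b ≤ f.natDegree ∧ w f ≠ ⊤ ∧ w (Polynomial.hasseDeriv b f) ≠ ⊤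

/-- `(w(g) - w(∂_c g))/c ≤ (w(f) - w(∂_b f))/b`, written multiplicatively
(cross-multiplied) to stay inside `WithTop Γ`. -/
def RatioLE (w : Polynomial K → WithTop Γ) (g : Polynomial K) (c : ℕ)
    (f : Polynomial K) (b : ℕ) : Prop :=
  b • w g + c • w (Polynomial.hasseDeriv b f) ≤ c • w f + b • w (Polynomial.hasseDeriv c g)

/-- `f` is a generator of the support of `w`. -/
def IsGenSupp (w : Polynomial K → WithTop Γ) (f : Polynomial K) : Prop :=
  ∀ g, w g = ⊤ ↔ f ∣ g

/-- `ε(f) ≥ ε(Q)` (for the valuation `w`), taking the conventions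
`ε(f) = -∞` if `deg f = 0` (more generally, if the defining set is empty) and
`ε(f) = ∞` if `f` generates the support of `w`. -/
def EpsGE (w : Polynomial K → WithTop Γ) (f Q : Polynomial K) : Prop :=
  IsGenSupp w f ∨
    (¬ IsGenSupp w Q ∧
      ((∀ c, ¬ ValidIdx w Q c) ∨
        ∃ b, ValidIdx w f b ∧ ∀ c, ValidIdx w Q c → RatioLE w Q c f b))

/-- `Q` is a key polynomial for `w` : `Q` is monic and
`ε(f) ≥ ε(Q)` implies `deg f ≥ deg Q`. -/
def IsKeyPoly (w : Polynomial K → WithTop Γ) (Q : Polynomial K) : Prop :=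
  Q.Monic ∧ ∀ f : Polynomial K, f ≠ 0 → EpsGE w f Q → Q.natDegree ≤ f.natDegree

private lemma coe_nsmul_withTop (n : ℕ) (x : Γ) :
    (n • (x : WithTop Γ) : WithTop Γ) = ((n • x : Γ) : WithTop Γ) := by
  induction n with
  | zero => simp
  | succ n ih => rw [succ_nsmul, succ_nsmul, ih, WithTop.coe_add]

private lemma expand_taylor (a : K) (p : Polynomial K) (M : ℕ) (hM : p.natDegree < M) :
    p = ∑ j ∈ Finset.range M, C ((Polynomial.taylor a p).coeff j) * (X - C a) ^ j := by
  conv_lhs => rw [← Polynomial.sum_taylor_eq p a]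
  exact Polynomial.sum_over_range' _ (fun n => by simp) M
    (by rwa [Polynomial.natDegree_taylor])

private lemma qCoeff_X_sub_C (a : K) (p : Polynomial K) (i : ℕ) :
    qCoeff (X - C a) p i = C ((Polynomial.taylor a p).coeff i) := by
  classical
  set c : ℕ → K := fun j => (Polynomial.taylor a p).coeff j with hc
  set M := max (i + 1) (p.natDegree + 1) with hM
  have hiM : i < M := lt_of_lt_of_le (Nat.lt_succ_self i) (le_max_left _ _)
  have hqi : ((X - C a) ^ i).Monic := (monic_X_sub_C a).pow i
  set Qd : Polynomial K := ∑ j ∈ Finset.Ico i M, C (c j) * (X - C a) ^ (j - i) with hQd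
  set Rr : Polynomial K := ∑ j ∈ Finset.range i, C (c j) * (X - C a) ^ j with hRr
  have hdegpow : ∀ k : ℕ, ((X - C a) ^ k).degree = (k : WithBot ℕ) := by
    intro k
    rw [Polynomial.degree_pow, Polynomial.degree_X_sub_C]
    simp
  have hsplit : Rr + (X - C a) ^ i * Qd = p := by
    rw [expand_taylor a p M (lt_of_lt_of_le (Nat.lt_succ_self _) (le_max_right _ _))]
    rw [Finset.range_eq_Ico, ← Finset.sum_Ico_consecutive _ (Nat.zero_le i) hiM.le]
    congr 1
    · rw [hRr, Finset.range_eq_Ico]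
    · rw [hQd, Finset.mul_sum]
      refine Finset.sum_congr rfl fun j hj => ?_
      rw [← mul_assoc, mul_comm ((X - C a) ^ i) (C (c j)), mul_assoc, ← pow_add,
        Nat.add_sub_cancel' (Finset.mem_Ico.mp hj).1]
  have hdeg : Rr.degree < ((X - C a) ^ i).degree := by
    rw [hdegpow i, hRr]
    refine lt_of_le_of_lt (Polynomial.degree_sum_le _ _) ?_
    refine (Finset.sup_lt_iff (show ⊥ < (i : WithBot ℕ) by exact_mod_cast WithBot.bot_lt_coe i)).mpr fun j hj => ?_
    refine lt_of_le_of_lt (Polynomial.degree_mul_le _ _) ?_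
    refine lt_of_le_of_lt (add_le_add Polynomial.degree_C_le (le_of_eq (hdegpow j))) ?_
    rw [zero_add]
    exact_mod_cast Finset.mem_range.mp hj
  have hdm := Polynomial.div_modByMonic_unique Qd Rr hqi ⟨hsplit, hdeg⟩
  have hdiv : p / (X - C a) ^ i = Qd := by
    rw [← Polynomial.divByMonic_eq_div p hqi, hdm.1]
  have heval : Qd.eval a = c i := by
    rw [hQd, Polynomial.eval_finset_sum]
    rw [Finset.sum_eq_single i]
    · simp
    · intro j hj hne
      have hji : j - i ≠ 0 := by
        have := (Finset.mem_Ico.mp hj).1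
        omega
      simp [sub_self, zero_pow hji]
    · intro h
      exact absurd (Finset.mem_Ico.mpr ⟨le_refl i, hiM⟩) h
  rw [qCoeff, hdiv, Polynomial.mod_X_sub_C_eq_C_eval, heval]

private lemma addval_sum_eq_inf (μ : AddValuation (Polynomial K) (WithTop Γ))
    (hKrull : ∀ p : Polynomial K, p ≠ 0 → μ p ≠ ⊤)
    (s : Finset ℕ) (t : ℕ → Polynomial K)
    (hdist : ∀ i ∈ s, ∀ j ∈ s, i ≠ j → t i = 0 ∨ t j = 0 ∨ μ (t i) ≠ μ (t j)) :
    μ (∑ i ∈ s, t i) = s.inf fun i => μ (t i) := by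
  classical
  revert hdist
  refine Finset.induction_on s ?_ ?_
  · intro _
    simp [AddValuation.map_zero]
  · rintro k s hk ih hdist
    have ih' := ih fun i hi j hj hne =>
      hdist i (Finset.mem_insert_of_mem hi) j (Finset.mem_insert_of_mem hj) hne
    rw [Finset.sum_insert hk, Finset.inf_insert]
    by_cases htk : t k = 0
    · rw [htk, zero_add, ih', AddValuation.map_zero, top_inf_eq]
    by_cases hs : μ (∑ i ∈ s, t i) = ⊤
    · have hsz : (∑ i ∈ s, t i) = 0 := by
        by_contra hne
        exact hKrull _ hne hs
      rw [← ih', hs, hsz, add_zero, inf_top_eq]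
    · have hne : μ (t k) ≠ μ (∑ i ∈ s, t i) := by
        have hsne : s.Nonempty := by
          rcases Finset.eq_empty_or_nonempty s with h | h
          · exfalso
            apply hs
            rw [h, Finset.sum_empty, AddValuation.map_zero]
          · exact h
        obtain ⟨j, hj, hjeq⟩ := Finset.exists_mem_eq_inf s hsne fun i => μ (t i)
        rw [ih', hjeq]
        have htj : t j ≠ 0 := by
          intro h0
          apply hs
          rw [ih', hjeq, h0, AddValuation.map_zero]
        rcases hdist k (Finset.mem_insert_self k _) j (Finset.mem_insert_of_mem hj)
          (by rintro rfl; exact hk hj) with h | h | h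
        · exact absurd h htk
        · exact absurd h htj
        · exact h
      rw [μ.map_add_of_distinct_val hne, ih']

private lemma addval_multiset_prod (μ : AddValuation (Polynomial K) (WithTop Γ))
    (s : Multiset (Polynomial K)) :
    μ s.prod = (s.map fun p => μ p).sum := by
  induction s using Multiset.induction_on with
  | empty => simp [AddValuation.map_one]
  | cons a s ih => simp [μ.map_mul, ih]

/-- If `μ` is a value-transcendental Krull valuation on `K̄[x]`
(encoded: there are nonzero `f, g` with `μ(f) - μ(g)` non-torsion modulo `μK̄`), then
there is `a ∈ K̄` such that `μ = μ_{a,δ}` with `δ = μ(x-a)`. -/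
theorem stmt14 [IsAlgClosed K] (μ : AddValuation (Polynomial K) (WithTop Γ))
    (hKrull : ∀ p : Polynomial K, p ≠ 0 → μ p ≠ ⊤)
    (f g : Polynomial K) (hf : f ≠ 0) (hg : g ≠ 0)
    (htor : ∀ n : ℕ, 0 < n → ∀ c d : K, c ≠ 0 → d ≠ 0 →
      n • μ f + μ (C d) ≠ n • μ g + μ (C c)) :
    ∃ a : K, ∀ p : Polynomial K, trunc (⇑μ) (X - C a) p = μ p := by
  classical
  have hμC : ∀ (n : ℕ) (c : K), n • μ (C c) = μ (C (c ^ n)) := fun n c => by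
    rw [map_pow, μ.map_pow]
  -- Step 1 : find `a` with `μ (X - C a)` non-torsion over `μ K`.
  have key : ∃ a : K, ∀ n : ℕ, 0 < n → ∀ c : K, c ≠ 0 → n • μ (X - C a) ≠ μ (C c) := by
    by_contra hcon
    push_neg at hcon
    have torp : ∀ p : Polynomial K, p ≠ 0 →
        ∃ n : ℕ, 0 < n ∧ ∃ e : K, e ≠ 0 ∧ n • μ p = μ (C e) := by
      intro p hp
      have hfac := (IsAlgClosed.splits p).eq_prod_roots
      have tors : ∀ s : Multiset K, ∃ n : ℕ, 0 < n ∧ ∃ e : K, e ≠ 0 ∧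
          n • ((s.map fun r => μ (X - C r)).sum) = μ (C e) := by
        intro s
        induction s using Multiset.induction_on with
        | empty =>
          refine ⟨1, one_pos, 1, one_ne_zero, ?_⟩
          rw [Multiset.map_zero, Multiset.sum_zero, one_smul, Polynomial.C_1]
          exact μ.map_one.symm
        | cons r s ih =>
          obtain ⟨n, hn, e, he, hne⟩ := ih
          obtain ⟨m, hm, d, hd, hmd⟩ := hcon r
          refine ⟨n * m, Nat.mul_pos hn hm, d ^ n * e ^ m,
            mul_ne_zero (pow_ne_zero _ hd) (pow_ne_zero _ he), ?_⟩
          rw [Multiset.map_cons, Multiset.sum_cons, smul_add]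
          have h1 : (n * m) • μ (X - C r) = μ (C (d ^ n)) := by
            rw [mul_smul, hmd, hμC]
          have h2 : (n * m) • ((s.map fun r => μ (X - C r)).sum) = μ (C (e ^ m)) := by
            rw [mul_comm n m, mul_smul, hne, hμC]
          rw [h1, h2, ← μ.map_mul, ← C_mul]
      obtain ⟨n, hn, e, he, hsum⟩ := tors p.roots
      have hmu : μ p = μ (C p.leadingCoeff) + ((p.roots.map fun r => μ (X - C r)).sum) := by
        conv_lhs => rw [hfac]
        rw [μ.map_mul, addval_multiset_prod μ, Multiset.map_map]
        rfl
      refine ⟨n, hn, p.leadingCoeff ^ n * e,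
        mul_ne_zero (pow_ne_zero _ (leadingCoeff_ne_zero.mpr hp)) he, ?_⟩
      rw [hmu, smul_add, hsum, hμC, ← μ.map_mul, ← C_mul]
    obtain ⟨n₁, hn₁, e₁, he₁, h1⟩ := torp f hf
    obtain ⟨n₂, hn₂, e₂, he₂, h2⟩ := torp g hg
    apply htor (n₁ * n₂) (Nat.mul_pos hn₁ hn₂) (e₁ ^ n₂) (e₂ ^ n₁)
      (pow_ne_zero _ he₁) (pow_ne_zero _ he₂)
    have hf' : (n₁ * n₂) • μ f = μ (C (e₁ ^ n₂)) := by
      rw [mul_comm n₁ n₂, mul_smul, h1, hμC]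
    have hg' : (n₁ * n₂) • μ g = μ (C (e₂ ^ n₁)) := by
      rw [mul_smul, h2, hμC]
    rw [hf', hg', add_comm]
  obtain ⟨a, ha⟩ := key
  refine ⟨a, fun p => ?_⟩
  by_cases hp : p = 0
  · subst hp
    simp [trunc, qCoeff, EuclideanDomain.zero_div, EuclideanDomain.zero_mod,
      AddValuation.map_zero]
  · set N := p.natDegree with hN
    set t : ℕ → Polynomial K := fun i => C ((Polynomial.taylor a p).coeff i) * (X - C a) ^ i
      with ht
    have hδ : μ (X - C a) ≠ ⊤ := hKrull _ (Polynomial.X_sub_C_ne_zero a)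
    obtain ⟨δ, hδeq⟩ := WithTop.ne_top_iff_exists.mp hδ
    have main : ∀ (k m : ℕ) (u v : K), 0 < m → u ≠ 0 → v ≠ 0 →
        μ (C u) + k • μ (X - C a) ≠ μ (C v) + (k + m) • μ (X - C a) := by
      intro k m u v hm hu hv heq
      rw [add_nsmul, ← hδeq, coe_nsmul_withTop, coe_nsmul_withTop,
        show ((k • δ : Γ) : WithTop Γ) + ((m • δ : Γ) : WithTop Γ)
          = ((m • δ : Γ) : WithTop Γ) + ((k • δ : Γ) : WithTop Γ) from add_comm _ _,
        ← add_assoc] at heq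
      have hcan : μ (C u) = μ (C v) + ((m • δ : Γ) : WithTop Γ) :=
        WithTop.add_right_cancel WithTop.coe_ne_top heq
      apply ha m hm (u * v⁻¹) (mul_ne_zero hu (inv_ne_zero hv))
      have h3 : μ (C v) + μ (C v⁻¹) = 0 := by
        rw [← μ.map_mul, ← C_mul, mul_inv_cancel₀ hv, Polynomial.C_1]
        exact μ.map_one
      rw [← hδeq, coe_nsmul_withTop, C_mul, μ.map_mul, hcan]
      rw [add_comm (μ (C v)) _, add_assoc, h3, add_zero]
    have hdist : ∀ i ∈ Finset.range (N + 1), ∀ j ∈ Finset.range (N + 1), i ≠ j →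
        t i = 0 ∨ t j = 0 ∨ μ (t i) ≠ μ (t j) := by
      intro i _ j _ hij
      by_cases hci : (Polynomial.taylor a p).coeff i = 0
      · left; simp [ht, hci]
      by_cases hcj : (Polynomial.taylor a p).coeff j = 0
      · right; left; simp [ht, hcj]
      right; right
      intro heq
      have hval : ∀ k : ℕ, μ (t k) = μ (C ((Polynomial.taylor a p).coeff k))
          + k • μ (X - C a) := by
        intro k
        rw [ht]
        simp only []
        rw [μ.map_mul, μ.map_pow]
      rw [hval i, hval j] at heq
      rcases hij.lt_or_gt with h | h
      · exact main i (j - i) _ _ (by omega) hci hcj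
          (by rw [Nat.add_sub_cancel' h.le]; exact heq)
      · exact main j (i - j) _ _ (by omega) hcj hci
          (by rw [Nat.add_sub_cancel' h.le]; exact heq.symm)
    calc trunc (⇑μ) (X - C a) p
        = (Finset.range (N + 1)).inf fun i => μ (t i) := by
          refine Finset.inf_congr rfl fun i _ => ?_
          rw [qCoeff_X_sub_C, ht]
      _ = μ (∑ i ∈ Finset.range (N + 1), t i) :=
          (addval_sum_eq_inf μ hKrull _ t hdist).symm
      _ = μ p := by
          rw [ht]
          rw [← expand_taylor a p (N + 1) (Nat.lt_succ_self _)]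
end

section
/- Suppose ν is a valuation on K[x] and q ∈ K[x] non-constant with ν_q a valuation. Then the graded algebra G_q of ν_q equals R_q[y], i.e., every homogeneous element in_q(f) is a sum Σ_{i∈S_q(f)} in_q(f_i) y^i, where f = Σ f_i q^i is the q-expansion and S_q(f) = {i : ν_q(f) = ν(f_i q^i)}. -/
open Polynomial

variable {K : Type*} [Field K] {Γ : Type*} [AddCommGroup Γ] [LinearOrder Γ] [IsOrderedAddMonoid Γ]

/-- The additive subgroup `P_γ = {f | ν_q(f) ≥ γ}`. -/
noncomputable def gradedP (W : AddValuation (Polynomial K) (WithTop Γ)) (γ : Γ) :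
    AddSubgroup (Polynomial K) where
  carrier := {f | (γ : WithTop Γ) ≤ W f}
  zero_mem' := by simp
  add_mem' {a b} ha hb := le_trans (le_min ha hb) (W.map_add a b)
  neg_mem' {a} ha := by simpa using ha

/-- The additive subgroup `P_γ⁺ = {f | ν_q(f) > γ}`. -/
noncomputable def gradedPplus (W : AddValuation (Polynomial K) (WithTop Γ)) (γ : Γ) :
    AddSubgroup (Polynomial K) where
  carrier := {f | (γ : WithTop Γ) < W f}
  zero_mem' := by simp [WithTop.coe_lt_top]
  add_mem' {a b} ha hb := lt_of_lt_of_le (lt_min ha hb) (W.map_add a b)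
  neg_mem' {a} ha := by simpa using ha

/-- The homogeneous component `P_γ / P_γ⁺` of the graded algebra. -/
noncomputable def gradedPiece (W : AddValuation (Polynomial K) (WithTop Γ)) (γ : Γ) :=
  gradedP W γ ⧸ (gradedPplus W γ).addSubgroupOf (gradedP W γ)

noncomputable instance (W : AddValuation (Polynomial K) (WithTop Γ)) (γ : Γ) :
    AddCommGroup (gradedPiece W γ) := by
  unfold gradedPiece; infer_instance

/-- The graded algebra `G_q = ⊕_γ P_γ/P_γ⁺` (as an additive group). -/
noncomputable def GradedAlg (W : AddValuation (Polynomial K) (WithTop Γ)) :=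
  DirectSum Γ fun γ => gradedPiece W γ

noncomputable instance (W : AddValuation (Polynomial K) (WithTop Γ)) :
    AddCommGroup (GradedAlg W) := by
  unfold GradedAlg; infer_instance

/-- The initial form `in_q(f)` of `f` in the graded algebra (`0` if `f` is in the support). -/
noncomputable def inq [DecidableEq Γ] (W : AddValuation (Polynomial K) (WithTop Γ))
    (f : Polynomial K) : GradedAlg W :=
  if h : W f = ⊤ then 0
  else DirectSum.of (fun γ => gradedPiece W γ) ((W f).untop h)
    (QuotientAddGroup.mk ⟨f, by exact le_of_eq (WithTop.coe_untop (W f) h)⟩)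

/-- `S_q(f) = {i : ν_q(f) = ν(f_i q^i)}`. -/
noncomputable def Sq (w : Polynomial K → WithTop Γ) (q f : Polynomial K) : Finset ℕ :=
  (Finset.range (f.natDegree + 1)).filter fun i => trunc w q f = w (qCoeff q f i * q ^ i)

/-- `δ_q(f) = max S_q(f)`, with value `⊥` when `f` lies in the support of `ν_q`
(i.e. when the initial form of `f` is zero, so that its `y`-degree is `-∞`). -/
noncomputable def deltaq (w : Polynomial K → WithTop Γ) (q f : Polynomial K) : WithBot ℕ :=
  if trunc w q f = ⊤ then ⊥ else (Sq w q f).max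

theorem pdiv_unique {c f g r : Polynomial K} (hc : c ≠ 0) (h : f = c * g + r)
    (hr : r.degree < c.degree) : f / c = g ∧ f % c = r := by
  have h2 : c * (f / c) + f % c = f := EuclideanDomain.div_add_mod f c
  have hmod : (f % c).degree < c.degree := EuclideanDomain.mod_lt f hc
  have key : f / c = g := by
    by_contra hne
    have hsub : c * (g - f / c) = f % c - r := by
      have := h2.trans h
      ring_nf
      linear_combination -this
    have h1 : c.degree ≤ (c * (g - f / c)).degree := by
      rw [degree_mul]
      apply le_add_of_nonneg_right
      rw [zero_le_degree_iff]
      exact sub_ne_zero_of_ne (Ne.symm hne)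
    have h3 : (f % c - r).degree < c.degree :=
      lt_of_le_of_lt (degree_sub_le _ _) (max_lt hmod hr)
    rw [hsub] at h1
    exact absurd h1 (not_le_of_gt h3)
  refine ⟨key, ?_⟩
  have := h2
  rw [key] at this
  have := this.trans h
  exact (add_right_inj _).mp this

theorem pdiv_div {b c : Polynomial K} (hb : b ≠ 0) (hc : c ≠ 0) (a : Polynomial K) :
    a / (b * c) = a / b / c := by
  have hbc : b * c ≠ 0 := mul_ne_zero hb hc
  have h1 : b * (a / b) + a % b = a := EuclideanDomain.div_add_mod a b
  have h2 : c * (a / b / c) + (a / b) % c = a / b := EuclideanDomain.div_add_mod (a / b) c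
  have key : a = (b * c) * (a / b / c) + (b * ((a / b) % c) + a % b) := by
    calc a = b * (a / b) + a % b := h1.symm
    _ = b * (c * (a / b / c) + (a / b) % c) + a % b := by rw [h2]
    _ = (b * c) * (a / b / c) + (b * ((a / b) % c) + a % b) := by ring
  refine (pdiv_unique hbc key ?_).1
  have hd1 : (b * ((a / b) % c)).degree < (b * c).degree := by
    rw [degree_mul, degree_mul]
    exact WithBot.add_lt_add_left (degree_ne_bot.mpr hb) (EuclideanDomain.mod_lt _ hc)
  have hd2 : (a % b).degree < (b * c).degree := by
    refine lt_of_lt_of_le (EuclideanDomain.mod_lt _ hb) ?_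
    rw [degree_mul]
    exact le_add_of_nonneg_right (zero_le_degree_iff.mpr hc)
  exact lt_of_le_of_lt (degree_add_le _ _) (max_lt hd1 hd2)

theorem qCoeff_zero (q : Polynomial K) (i : ℕ) : qCoeff q 0 i = 0 := by
  simp [qCoeff, EuclideanDomain.zero_div]

theorem qCoeff_succ {q : Polynomial K} (hq : q ≠ 0) (f : Polynomial K) (i : ℕ) :
    qCoeff q f (i + 1) = qCoeff q (f / q) i := by
  unfold qCoeff
  rw [pow_succ', pdiv_div hq (pow_ne_zero i hq)]

theorem qExpansion_aux {q : Polynomial K} (hq : 0 < q.natDegree) :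
    ∀ N (f : Polynomial K), f.natDegree ≤ N →
      ∑ i ∈ Finset.range (N + 1), qCoeff q f i * q ^ i = f := by
  have hq0 : q ≠ 0 := fun h => by simp [h] at hq
  have hdq : 0 < q.degree := natDegree_pos_iff_degree_pos.mp hq
  intro N
  induction N with
  | zero =>
    intro f hf
    rw [show (0 : ℕ) + 1 = 1 from rfl, Finset.sum_range_one, pow_zero, mul_one]
    show f / q ^ 0 % q = f
    rw [pow_zero, EuclideanDomain.div_one, mod_eq_self_iff hq0]
    calc f.degree ≤ (f.natDegree : WithBot ℕ) := degree_le_natDegree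
    _ ≤ (0 : ℕ) := by exact_mod_cast hf
    _ < q.degree := hdq
  | succ N ih =>
    intro f hf
    by_cases hf0 : f = 0
    · simp [hf0, qCoeff_zero]
    rw [Finset.sum_range_succ']
    simp only [pow_zero, mul_one]
    have hc0 : qCoeff q f 0 = f % q := by
      simp [qCoeff, EuclideanDomain.div_one]
    have hrec : ∀ i, qCoeff q f (i + 1) * q ^ (i + 1) = (qCoeff q (f / q) i * q ^ i) * q := by
      intro i
      rw [qCoeff_succ hq0, pow_succ]; ring
    rw [hc0]
    have hdiv : (f / q).natDegree ≤ N := by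
      by_cases h0 : f / q = 0
      · simp [h0]
      · have := degree_div_lt hf0 hdq
        have := natDegree_lt_natDegree h0 this
        omega
    calc (∑ i ∈ Finset.range (N + 1), qCoeff q f (i + 1) * q ^ (i + 1)) + f % q
        = (∑ i ∈ Finset.range (N + 1), qCoeff q (f / q) i * q ^ i) * q + f % q := by
          rw [Finset.sum_mul]; congr 1; exact Finset.sum_congr rfl fun i _ => hrec i
    _ = (f / q) * q + f % q := by rw [ih _ hdiv]
    _ = f := by rw [mul_comm]; exact EuclideanDomain.div_add_mod f q

theorem qCoeff_mul_pow_self {q : Polynomial K} (hq0 : q ≠ 0) {g : Polynomial K}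
    (hg : g.degree < q.degree) (i : ℕ) : qCoeff q (g * q ^ i) i = g := by
  unfold qCoeff
  rw [mul_comm g, mul_div_cancel_left₀ _ (pow_ne_zero i hq0)]
  exact (mod_eq_self_iff hq0).mpr hg

theorem qCoeff_mul_pow_lt {q : Polynomial K} (hq0 : q ≠ 0) (g : Polynomial K) {i j : ℕ}
    (hij : j < i) : qCoeff q (g * q ^ i) j = 0 := by
  unfold qCoeff
  have h : g * q ^ i = q ^ j * (g * q ^ (i - j)) := by
    rw [mul_left_comm, ← pow_add]
    congr 2
    omega
  rw [h, mul_div_cancel_left₀ _ (pow_ne_zero j hq0),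
    EuclideanDomain.mod_eq_zero]
  exact Dvd.dvd.mul_left (dvd_pow_self q (by omega : i - j ≠ 0)) g

theorem qCoeff_mul_pow_gt {q : Polynomial K} (hq : 0 < q.natDegree) {g : Polynomial K}
    (hg : g.degree < q.degree) {i j : ℕ} (hij : i < j) : qCoeff q (g * q ^ i) j = 0 := by
  have hq0 : q ≠ 0 := fun h => by simp [h] at hq
  unfold qCoeff
  have h : (g * q ^ i) / q ^ j = 0 := by
    rw [Polynomial.div_eq_zero_iff (pow_ne_zero j hq0)]
    by_cases hg0 : g = 0
    · simp only [hg0, zero_mul, degree_zero]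
      exact bot_lt_iff_ne_bot.mpr (degree_ne_bot.mpr (pow_ne_zero j hq0))
    apply degree_lt_degree
    rw [natDegree_mul hg0 (pow_ne_zero i hq0), natDegree_pow, natDegree_pow]
    have : g.natDegree < q.natDegree := natDegree_lt_natDegree hg0 hg
    nlinarith
  rw [h, EuclideanDomain.zero_mod]

theorem trunc_mul_pow (nu : AddValuation (Polynomial K) (WithTop Γ)) {q : Polynomial K}
    (hq : 0 < q.natDegree) {g : Polynomial K} (hg : g.degree < q.degree) (i : ℕ) :
    trunc (⇑nu) q (g * q ^ i) = nu (g * q ^ i) := by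
  have hq0 : q ≠ 0 := fun h => by simp [h] at hq
  by_cases hg0 : g = 0
  · subst hg0
    rw [zero_mul]
    unfold trunc
    apply le_antisymm
    · refine le_trans (Finset.inf_le (Finset.mem_range.mpr (Nat.succ_pos _))) ?_
      rw [qCoeff_zero, zero_mul]
    · exact Finset.le_inf fun j _ => by rw [qCoeff_zero, zero_mul]
  · have hgq0 : g * q ^ i ≠ 0 := mul_ne_zero hg0 (pow_ne_zero i hq0)
    have hi : i ∈ Finset.range ((g * q ^ i).natDegree + 1) := by
      rw [Finset.mem_range, natDegree_mul hg0 (pow_ne_zero i hq0), natDegree_pow]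
      nlinarith
    unfold trunc
    apply le_antisymm
    · refine le_trans (Finset.inf_le hi) ?_
      rw [qCoeff_mul_pow_self hq0 hg]
    · refine Finset.le_inf fun j _ => ?_
      rcases lt_trichotomy j i with h | h | h
      · rw [qCoeff_mul_pow_lt hq0 g h, zero_mul]
        exact le_top.trans_eq nu.map_zero.symm
      · rw [h, qCoeff_mul_pow_self hq0 hg]
      · rw [qCoeff_mul_pow_gt hq hg h, zero_mul]
        exact le_top.trans_eq nu.map_zero.symm

theorem lt_val_sum (W : AddValuation (Polynomial K) (WithTop Γ)) {γ : Γ} {ι : Type*}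
    {s : Finset ι} {g : ι → Polynomial K} (h : ∀ i ∈ s, (γ : WithTop Γ) < W (g i)) :
    (γ : WithTop Γ) < W (∑ i ∈ s, g i) := by
  classical
  induction s using Finset.induction with
  | empty => simp [W.map_zero, WithTop.coe_lt_top]
  | insert _ _ hx ih =>
    rw [Finset.sum_insert hx]
    refine lt_of_lt_of_le (lt_min (h _ (Finset.mem_insert_self _ _))
      (ih fun i hi => h i (Finset.mem_insert_of_mem hi))) (W.map_add _ _)

theorem inq_eq [DecidableEq Γ] (W : AddValuation (Polynomial K) (WithTop Γ)) {γ₀ : Γ}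
    {g : Polynomial K} (hg : W g = ↑γ₀) :
    inq W g = DirectSum.of (fun γ => gradedPiece W γ) γ₀
      (QuotientAddGroup.mk ⟨g, le_of_eq hg.symm⟩) := by
  have h : W g ≠ ⊤ := by rw [hg]; exact WithTop.coe_ne_top
  rw [inq]
  have huntop : (W g).untop h = γ₀ := by
    have h2 := WithTop.coe_untop (W g) h
    exact WithTop.coe_injective (h2.trans hg)
  subst huntop
  exact dif_neg h

/-- `G_q = R_q[y]` : every initial form `in_q(f)` equals
`Σ_{i ∈ S_q(f)} in_q(f_i) y^i = Σ_{i ∈ S_q(f)} in_q(f_i q^i)`, where `f = Σ f_i q^i` is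
the `q`-expansion and `S_q(f) = {i : ν_q(f) = ν(f_i q^i)}`. -/
theorem stmt17 [DecidableEq Γ] (ν : AddValuation (Polynomial K) (WithTop Γ))
    (q : Polynomial K) (hq : 0 < q.natDegree)
    (W : AddValuation (Polynomial K) (WithTop Γ)) (hW : ∀ f, W f = trunc (⇑ν) q f) :
    ∀ f : Polynomial K,
      inq W f = ∑ i ∈ Sq (⇑ν) q f, inq W (qCoeff q f i * q ^ i) := by
  intro f
  have hq0 : q ≠ 0 := fun h => by simp [h] at hq
  have hdegc : ∀ i, (qCoeff q f i).degree < q.degree := fun i => EuclideanDomain.mod_lt _ hq0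
  by_cases htop : W f = ⊤
  · -- everything is zero
    have htr : trunc (⇑ν) q f = ⊤ := (hW f).symm.trans htop
    rw [show inq W f = 0 from dif_pos htop]
    symm
    apply Finset.sum_eq_zero
    intro i hi
    simp only [Sq, Finset.mem_filter] at hi
    have hiS := hi.2
    have hT : W (qCoeff q f i * q ^ i) = ⊤ := by
      rw [hW, trunc_mul_pow ν hq (hdegc i), ← hiS, htr]
    exact dif_pos hT
  · set γ₀ := (W f).untop htop with hγdef
    have hγ : W f = ↑γ₀ := (WithTop.coe_untop _ htop).symm
    have htr : trunc (⇑ν) q f = ↑γ₀ := (hW f).symm.trans hγ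
    have hmem : ∀ i ∈ Sq (⇑ν) q f, W (qCoeff q f i * q ^ i) = (↑γ₀ : WithTop Γ) := by
      intro i hi
      simp only [Sq, Finset.mem_filter] at hi
      rw [hW, trunc_mul_pow ν hq (hdegc i)]
      exact (hi.2).symm.trans htr
    rw [inq_eq W hγ, ← Finset.sum_attach (Sq (⇑ν) q f)
      (fun i => inq W (qCoeff q f i * q ^ i))]
    have hterm : ∀ i : {x // x ∈ Sq (⇑ν) q f},
        inq W (qCoeff q f i.1 * q ^ i.1) =
          DirectSum.of (fun γ => gradedPiece W γ) γ₀
            (QuotientAddGroup.mk ⟨qCoeff q f i.1 * q ^ i.1,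
              le_of_eq (hmem i.1 i.2).symm⟩) :=
      fun i => inq_eq W (hmem i.1 i.2)
    rw [Finset.sum_congr rfl fun i _ => hterm i]
    let φ : gradedP W γ₀ →+ GradedAlg W :=
      (DirectSum.of (fun γ => gradedPiece W γ) γ₀).comp
        (QuotientAddGroup.mk' ((gradedPplus W γ₀).addSubgroupOf (gradedP W γ₀)))
    have hφ : ∀ (a : gradedP W γ₀), φ a = DirectSum.of (fun γ => gradedPiece W γ) γ₀
        (QuotientAddGroup.mk a) := fun a => rfl
    rw [← hφ, Finset.sum_congr rfl fun i _ => (hφ _).symm, ← map_sum]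
    have key : ∀ a b : gradedP W γ₀,
        (QuotientAddGroup.mk a :
            gradedP W γ₀ ⧸ (gradedPplus W γ₀).addSubgroupOf (gradedP W γ₀)) =
          QuotientAddGroup.mk b → φ a = φ b := by
      intro a b h
      show DirectSum.of (fun γ => gradedPiece W γ) γ₀ (QuotientAddGroup.mk a) =
        DirectSum.of (fun γ => gradedPiece W γ) γ₀ (QuotientAddGroup.mk b)
      rw [h]
    apply key
    rw [QuotientAddGroup.eq, AddSubgroup.mem_addSubgroupOf]
    show (↑γ₀ : WithTop Γ) < W _
    have hcoe : ((-⟨f, le_of_eq hγ.symm⟩ + ∑ x ∈ (Sq (⇑ν) q f).attach,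
          (⟨qCoeff q f x.1 * q ^ x.1, le_of_eq (hmem x.1 x.2).symm⟩ : gradedP W γ₀) :
            gradedP W γ₀) : Polynomial K) =
        -f + ∑ i ∈ Sq (⇑ν) q f, qCoeff q f i * q ^ i := by
      push_cast
      rw [Finset.sum_attach (Sq (⇑ν) q f) (fun i => qCoeff q f i * q ^ i)]
    rw [hcoe]
    have hexp : ∑ i ∈ Finset.range (f.natDegree + 1), qCoeff q f i * q ^ i = f :=
      qExpansion_aux hq f.natDegree f le_rfl
    have hsplit : -f + ∑ i ∈ Sq (⇑ν) q f, qCoeff q f i * q ^ i =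
        -(∑ i ∈ (Finset.range (f.natDegree + 1)).filter
            (fun i => ¬ trunc (⇑ν) q f = ν (qCoeff q f i * q ^ i)),
          qCoeff q f i * q ^ i) := by
      have hSq : Sq (⇑ν) q f = (Finset.range (f.natDegree + 1)).filter
          (fun i => trunc (⇑ν) q f = ν (qCoeff q f i * q ^ i)) := by
        simp [Sq]
      have hsum := Finset.sum_filter_add_sum_filter_not (Finset.range (f.natDegree + 1))
        (fun i => trunc (⇑ν) q f = ν (qCoeff q f i * q ^ i)) (fun i => qCoeff q f i * q ^ i)
      rw [hexp] at hsum
      rw [hSq]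
      linear_combination hsum
    rw [hsplit, AddValuation.map_neg]
    apply lt_val_sum
    intro i hi
    rw [Finset.mem_filter] at hi
    rw [hW, trunc_mul_pow ν hq (hdegc i)]
    refine lt_of_le_of_ne ?_ ?_
    · rw [← htr]
      exact Finset.inf_le hi.1
    · rw [← htr]
      exact hi.2
end

section
/- Let ν be a Krull valuation on K[x], μ an extension of ν to K̄[x], Q a key polynomial for ν, and a ∈ K̄ an optimizing root of Q. Then the restriction to K[x] of the truncation μ_{x−a} of μ at x−a equals the truncation ν_Q of ν at Q: for every f ∈ K[x], ν_Q(f) = μ_{x−a}(f). -/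
open Polynomial

variable {K : Type*} [Field K] {Γ : Type*} [AddCommGroup Γ] [LinearOrder Γ] [IsOrderedAddMonoid Γ]

namespace Stmt19Aux

theorem wt_nsmul_ne_top {x : WithTop Γ} (hx : x ≠ ⊤) (n : ℕ) : n • x ≠ ⊤ := by
  induction n with
  | zero => simp
  | succ k ih => rw [succ_nsmul]; exact WithTop.add_ne_top.2 ⟨ih, hx⟩

theorem wt_add_lt_add {x y z w : WithTop Γ} (hx : x ≠ ⊤) (hy : y ≠ ⊤)
    (h1 : x < z) (h2 : y ≤ w) : x + y < z + w := by
  by_cases hzw : z = ⊤ ∨ w = ⊤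
  · have : z + w = ⊤ := by rcases hzw with h | h <;> simp [h]
    rw [this]
    simpa [lt_top_iff_ne_top] using WithTop.add_ne_top.2 ⟨hx, hy⟩
  · push_neg at hzw
    obtain ⟨hz, hw⟩ := hzw
    lift x to Γ using hx; lift y to Γ using hy; lift z to Γ using hz; lift w to Γ using hw
    exact_mod_cast add_lt_add_of_lt_of_le (by exact_mod_cast h1) (by exact_mod_cast h2)

theorem wt_le_of_add_le_add_right {x y c : WithTop Γ} (hc : c ≠ ⊤)
    (h : x + c ≤ y + c) : x ≤ y :=
  (WithTop.add_le_add_iff_right hc).1 h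

theorem wt_lt_of_add_lt_add_right {x y c : WithTop Γ} (h : x + c < y + c) : x < y :=
  lt_of_add_lt_add_right h

theorem inf_add_const {ι : Type*} {s : Finset ι} (hs : s.Nonempty)
    (f : ι → WithTop Γ) (c : WithTop Γ) :
    s.inf f + c = s.inf fun i => f i + c := by
  apply le_antisymm
  · refine Finset.le_inf fun b hb => add_le_add_left (Finset.inf_le hb) c
  · obtain ⟨b, hb, he⟩ := Finset.exists_mem_eq_inf s hs f
    calc s.inf (fun i => f i + c) ≤ f b + c := Finset.inf_le hb
    _ = s.inf f + c := by rw [← he]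

theorem inf_range_succ_shift (N : ℕ) (F : ℕ → WithTop Γ) :
    (Finset.range (N + 1)).inf F = F 0 ⊓ (Finset.range N).inf fun i => F (i + 1) := by
  induction N with
  | zero => simp
  | succ n ih =>
    rw [Finset.range_add_one, Finset.inf_insert, ih, Finset.range_add_one, Finset.inf_insert]
    rw [inf_left_comm]

theorem inf_pad {N M : ℕ} (hNM : N ≤ M) (F : ℕ → WithTop Γ)
    (hF : ∀ i, N < i → F i = ⊤) :
    (Finset.range (N + 1)).inf F = (Finset.range (M + 1)).inf F := by
  apply le_antisymm
  · refine Finset.le_inf fun b hb => ?_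
    rcases le_or_gt b N with h | h
    · exact Finset.inf_le (Finset.mem_range.2 (Nat.lt_succ_of_le h))
    · rw [hF b h]; exact le_top
  · exact Finset.inf_mono (Finset.range_subset_range.2 (by omega))

section Val

variable {L : Type*} [Field L] (μ : AddValuation (Polynomial L) (WithTop Γ))

theorem muC_ne_top {u : L} (hu : u ≠ 0) : μ (C u) ≠ ⊤ := by
  intro h
  have h0 : μ (C u * C u⁻¹) = μ 1 := by
    rw [← C_mul, mul_inv_cancel₀ hu, C_1]
  rw [μ.map_mul, μ.map_one, h, top_add] at h0
  simp at h0

theorem mu_multiset_prod (T : Multiset (Polynomial L)) :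
    μ T.prod = (T.map ⇑μ).sum := by
  induction T using Multiset.induction_on with
  | empty => simp
  | cons p T ih => simp [μ.map_mul, ih]

/-- The product `∏_{s ∈ R} (X - C s)`. -/
noncomputable def PP (R : Multiset L) : Polynomial L :=
  (R.map fun s => X - C s).prod

theorem PP_zero : PP (0 : Multiset L) = 1 := by simp [PP]

theorem PP_cons (s : L) (R : Multiset L) : PP (s ::ₘ R) = (X - C s) * PP R := by
  simp [PP]

theorem PP_add (R S : Multiset L) : PP (R + S) = PP R * PP S := by
  simp [PP]

theorem PP_monic (R : Multiset L) : (PP R).Monic :=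
  monic_multiset_prod_of_monic _ _ fun s _ => monic_X_sub_C s

theorem PP_ne_zero (R : Multiset L) : PP R ≠ 0 := (PP_monic R).ne_zero

theorem mu_PP (R : Multiset L) :
    μ (PP R) = (R.map fun s => μ (X - C s)).sum := by
  rw [PP, mu_multiset_prod, Multiset.map_map]
  rfl

theorem mu_PP_ne_top {R : Multiset L} {γ : WithTop Γ}
    (h : ∀ s ∈ R, μ (X - C s) < γ) : μ (PP R) ≠ ⊤ := by
  rw [mu_PP]
  induction R using Multiset.induction_on with
  | empty => simp
  | cons p T ih =>
    rw [Multiset.map_cons, Multiset.sum_cons]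
    exact WithTop.add_ne_top.2 ⟨(h p (Multiset.mem_cons_self p T)).ne_top,
      ih fun s hs => h s (Multiset.mem_cons_of_mem hs)⟩

end Val

section HD

variable {L : Type*} [Field L]

theorem hd_X_sub_C_zero (s : L) : hasseDeriv 0 (X - C s) = X - C s := by simp

theorem hd_X_sub_C_one (s : L) : hasseDeriv 1 (X - C s) = 1 := by
  rw [hasseDeriv_one]; simp

theorem hd_X_sub_C_ge (s : L) {i : ℕ} (hi : 2 ≤ i) : hasseDeriv i (X - C s) = 0 := by
  rw [map_sub, hasseDeriv_C _ _ (by omega), ← monomial_one_one_eq_X, hasseDeriv_monomial]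
  simp [Nat.choose_eq_zero_of_lt (by omega : (1:ℕ) < i)]

/-- Leibniz rule for a linear factor. -/
theorem hd_linear (p : Polynomial L) (s : L) (j : ℕ) :
    hasseDeriv (j + 1) (p * (X - C s)) =
      hasseDeriv (j + 1) p * (X - C s) + hasseDeriv j p := by
  rw [hasseDeriv_mul]
  rw [Finset.Nat.sum_antidiagonal_eq_sum_range_succ
    (fun i k => hasseDeriv i p * hasseDeriv k (X - C s))]
  have hsub : ({j, j + 1} : Finset ℕ) ⊆ Finset.range (j + 1 + 1) := by
    intro x hx
    simp only [Finset.mem_insert, Finset.mem_singleton] at hx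
    rcases hx with rfl | rfl <;> simp [Finset.mem_range] <;> omega
  rw [← Finset.sum_subset hsub ?_]
  · rw [Finset.sum_insert (by simp), Finset.sum_singleton]
    rw [show j + 1 - j = 1 by omega, Nat.sub_self, hd_X_sub_C_one, hd_X_sub_C_zero]
    ring
  · intro x hx hx2
    simp only [Finset.mem_insert, Finset.mem_singleton, not_or] at hx2
    have hxr : x < j + 2 := by simp [Finset.mem_range] at hx; omega
    rw [hd_X_sub_C_ge _ (by omega), mul_zero]

/-- The top Hasse derivative of a monic polynomial is 1. -/
theorem hd_top {p : Polynomial L} (hp : p.Monic) :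
    hasseDeriv p.natDegree p = 1 := by
  ext n
  rw [hasseDeriv_coeff]
  rcases Nat.eq_zero_or_pos n with rfl | hn
  · simpa using hp.coeff_natDegree
  · rw [coeff_eq_zero_of_natDegree_lt (by omega)]
    simp [coeff_one, hn.ne']

end HD

section Phi

variable {L : Type*} [Field L] (μ : AddValuation (Polynomial L) (WithTop Γ)) (a : L)

theorem wt_min_add (x y c : WithTop Γ) : min x y + c = min (x + c) (y + c) := by
  rcases le_total x y with h | h
  · rw [min_eq_left h, min_eq_left (add_le_add_left h c)]
  · rw [min_eq_right h, min_eq_right (add_le_add_left h c)]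

theorem le_mu_add_add {u v : Polynomial L} {c t : WithTop Γ}
    (h1 : t ≤ μ u + c) (h2 : t ≤ μ v + c) : t ≤ μ (u + v) + c :=
  calc t ≤ min (μ u + c) (μ v + c) := le_min h1 h2
  _ = min (μ u) (μ v) + c := (wt_min_add _ _ _).symm
  _ ≤ μ (u + v) + c := add_le_add_left (μ.map_add u v) c

theorem PP_natDegree (R : Multiset L) : (PP R).natDegree = Multiset.card R := by
  rw [PP, natDegree_multiset_prod_of_monic _ (fun f hf => by
    obtain ⟨s, _, rfl⟩ := Multiset.mem_map.1 hf; exact monic_X_sub_C s)]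
  rw [Multiset.map_map]
  simp [natDegree_X_sub_C]

theorem phi_hi (H : Multiset L)
    (hH : ∀ s ∈ H, μ (X - C a) ≤ μ (X - C s)) :
    ∀ i, (Multiset.card H) • μ (X - C a) ≤ μ (hasseDeriv i (PP H)) + i • μ (X - C a) := by
  induction H using Multiset.induction_on with
  | empty =>
    intro i
    rcases Nat.eq_zero_or_pos i with rfl | hi
    · simp [PP_zero]
    · rw [PP_zero, show (1 : Polynomial L) = C 1 from C_1.symm,
        hasseDeriv_C _ _ (by omega)]
      simp
  | cons s H ih =>
    intro i
    have ihs : ∀ s' ∈ H, μ (X - C a) ≤ μ (X - C s') :=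
      fun s' hs' => hH s' (Multiset.mem_cons_of_mem hs')
    have hs : μ (X - C a) ≤ μ (X - C s) := hH s (Multiset.mem_cons_self s H)
    rw [PP_cons, Multiset.card_cons, mul_comm]
    rcases i with _ | j
    · have h0 := ih ihs 0
      simp only [hasseDeriv_zero, LinearMap.id_coe, id_eq, zero_smul, add_zero] at h0 ⊢
      rw [μ.map_mul, succ_nsmul]
      exact add_le_add h0 hs
    · rw [hd_linear]
      apply le_mu_add_add
      · rw [μ.map_mul]
        calc (Multiset.card H + 1) • μ (X - C a)
            = Multiset.card H • μ (X - C a) + μ (X - C a) := succ_nsmul _ _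
        _ ≤ (μ (hasseDeriv (j+1) (PP H)) + (j+1) • μ (X - C a)) + μ (X - C s) :=
              add_le_add (ih ihs (j+1)) hs
        _ = μ (hasseDeriv (j+1) (PP H)) + μ (X - C s) + (j+1) • μ (X - C a) := by
              rw [add_right_comm]
      · calc (Multiset.card H + 1) • μ (X - C a)
            = Multiset.card H • μ (X - C a) + μ (X - C a) := succ_nsmul _ _
        _ ≤ (μ (hasseDeriv j (PP H)) + j • μ (X - C a)) + μ (X - C a) :=
              add_le_add_left (ih ihs j) _
        _ = μ (hasseDeriv j (PP H)) + (j + 1) • μ (X - C a) := by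
              rw [succ_nsmul, ← add_assoc]

theorem phi (hγ : μ (X - C a) ≠ ⊤) (H S : Multiset L)
    (hH : ∀ s ∈ H, μ (X - C a) ≤ μ (X - C s))
    (hS : ∀ s ∈ S, μ (X - C s) < μ (X - C a)) :
    μ (hasseDeriv (Multiset.card H) (PP H * PP S)) = μ (PP S) ∧
    ∀ i, μ (PP S) + (Multiset.card H) • μ (X - C a) ≤
      μ (hasseDeriv i (PP H * PP S)) + i • μ (X - C a) := by
  induction S using Multiset.induction_on with
  | empty =>
    constructor
    · rw [PP_zero, mul_one, show Multiset.card H = (PP H).natDegree from (PP_natDegree H).symm,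
        hd_top (PP_monic H), μ.map_one]
    · intro i
      rw [PP_zero, mul_one, μ.map_one, zero_add]
      exact phi_hi μ a H hH i
  | cons s S ih =>
    have hs : μ (X - C s) < μ (X - C a) := hS s (Multiset.mem_cons_self s S)
    have hS' : ∀ s' ∈ S, μ (X - C s') < μ (X - C a) :=
      fun s' hs' => hS s' (Multiset.mem_cons_of_mem hs')
    obtain ⟨ih1, ih2⟩ := ih hS'
    have hW : PP H * PP (s ::ₘ S) = (PP H * PP S) * (X - C s) := by
      rw [PP_cons]; ring1
    have hPS' : μ (PP (s ::ₘ S)) = μ (X - C s) + μ (PP S) := by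
      rw [PP_cons, μ.map_mul]
    constructor
    · rw [hW]
      rcases Nat.eq_zero_or_pos (Multiset.card H) with hm | hm
      · have hH0 : H = 0 := Multiset.card_eq_zero.1 hm
        subst hH0
        rw [hm, hasseDeriv_zero]
        simp only [LinearMap.id_coe, id_eq, PP_zero, one_mul]
        rw [μ.map_mul, hPS', add_comm]
      · obtain ⟨k, hk⟩ : ∃ k, Multiset.card H = k + 1 := ⟨_, (Nat.succ_pred_eq_of_pos hm).symm⟩
        rw [hk] at ih1 ih2 ⊢
        rw [hd_linear]
        have hA : μ (hasseDeriv (k+1) (PP H * PP S) * (X - C s)) = μ (PP S) + μ (X - C s) := by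
          rw [μ.map_mul, ih1]
        have hPSne : μ (PP S) ≠ ⊤ := mu_PP_ne_top μ hS'
        have hB : μ (PP S) + μ (X - C s) < μ (hasseDeriv k (PP H * PP S)) := by
          have h2 := ih2 k
          rw [succ_nsmul (μ (X - C a)) k] at h2
          have h2' : (μ (PP S) + μ (X - C a)) + k • μ (X - C a) ≤
              μ (hasseDeriv k (PP H * PP S)) + k • μ (X - C a) := by
            calc (μ (PP S) + μ (X - C a)) + k • μ (X - C a)
                = μ (PP S) + (k • μ (X - C a) + μ (X - C a)) := by abel
            _ ≤ _ := h2
          have h3 := wt_le_of_add_le_add_right (wt_nsmul_ne_top hγ k) h2'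
          calc μ (PP S) + μ (X - C s) < μ (PP S) + μ (X - C a) :=
            WithTop.add_lt_add_left hPSne hs
          _ ≤ _ := h3
        rw [μ.map_add_eq_of_lt_left (by rw [hA]; exact hB), hA, hPS', add_comm]
    · intro i
      rw [hW]
      rcases i with _ | j
      · simp only [hasseDeriv_zero, LinearMap.id_coe, id_eq, zero_smul, add_zero]
        rw [μ.map_mul, hPS']
        calc μ (X - C s) + μ (PP S) + Multiset.card H • μ (X - C a)
            = (μ (PP S) + Multiset.card H • μ (X - C a)) + μ (X - C s) := by abel
        _ ≤ μ (PP H * PP S) + μ (X - C s) := by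
              have h0 := ih2 0
              simp only [hasseDeriv_zero, LinearMap.id_coe, id_eq, zero_smul, add_zero] at h0
              exact add_le_add_left h0 _
      · rw [hd_linear]
        apply le_mu_add_add
        · rw [μ.map_mul, hPS']
          calc μ (X - C s) + μ (PP S) + Multiset.card H • μ (X - C a)
              = (μ (PP S) + Multiset.card H • μ (X - C a)) + μ (X - C s) := by abel
          _ ≤ (μ (hasseDeriv (j+1) (PP H * PP S)) + (j+1) • μ (X - C a)) + μ (X - C s) :=
                add_le_add_left (ih2 (j+1)) _
          _ = μ (hasseDeriv (j+1) (PP H * PP S)) + μ (X - C s) + (j+1) • μ (X - C a) := by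
                rw [add_right_comm]
        · rw [hPS', succ_nsmul (μ (X - C a)) j]
          calc μ (X - C s) + μ (PP S) + Multiset.card H • μ (X - C a)
              ≤ μ (X - C a) + μ (PP S) + Multiset.card H • μ (X - C a) :=
                add_le_add_left (add_le_add_left hs.le _) _
          _ = (μ (PP S) + Multiset.card H • μ (X - C a)) + μ (X - C a) := by abel
          _ ≤ (μ (hasseDeriv j (PP H * PP S)) + j • μ (X - C a)) + μ (X - C a) :=
                add_le_add_left (ih2 j) _
          _ = μ (hasseDeriv j (PP H * PP S)) + (j • μ (X - C a) + μ (X - C a)) := by abel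

end Phi

section Coeffs

variable {L : Type*} [Field L] (μ : AddValuation (Polynomial L) (WithTop Γ)) (a : L)

theorem le_mu_sub_add {u v : Polynomial L} {c t : WithTop Γ}
    (h1 : t ≤ μ u + c) (h2 : t ≤ μ v + c) : t ≤ μ (u - v) + c :=
  calc t ≤ min (μ u + c) (μ v + c) := le_min h1 h2
  _ = min (μ u) (μ v) + c := (wt_min_add _ _ _).symm
  _ ≤ μ (u - v) + c := add_le_add_left (μ.map_sub u v) c

theorem muC_amb_of_lt {s : L} (h : μ (X - C s) < μ (X - C a)) :
    μ (C (a - s)) = μ (X - C s) := by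
  have he : (X - C s) - (X - C a) = C (a - s) := by
    rw [C_sub]; ring
  rw [← he, μ.map_sub_eq_of_lt_left h]

theorem min_muC_of_le {s : L} (h : μ (X - C s) ≤ μ (X - C a)) :
    min (μ (X - C a)) (μ (C (a - s))) = μ (X - C s) := by
  rcases lt_or_eq_of_le h with hlt | heq
  · rw [muC_amb_of_lt μ a hlt, min_eq_right hlt.le]
  · have he : (X - C s) - (X - C a) = C (a - s) := by
      rw [C_sub]; ring
    have hge : μ (X - C a) ≤ μ (C (a - s)) := by
      rw [← he]
      refine le_trans ?_ (μ.map_sub _ _)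
      rw [← heq]; exact le_min le_rfl le_rfl
    rw [min_eq_left hge, heq]

theorem taylor_PP (R : Multiset L) :
    taylor a (PP R) = PP (R.map fun s => s - a) := by
  induction R using Multiset.induction_on with
  | empty => simp [PP_zero]
  | cons s R ih =>
    rw [PP_cons, taylor_mul, ih, Multiset.map_cons, PP_cons]
    congr 1
    rw [map_sub, taylor_X, taylor_C, C_sub]
    ring

theorem coeff_PP_bound (R' : Multiset L) (j : ℕ) :
    (R'.map fun u => min (μ (X - C a)) (μ (C u))).sum ≤
      μ (C ((PP R').coeff j)) + j • μ (X - C a) := by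
  induction R' using Multiset.induction_on generalizing j with
  | empty =>
    rcases Nat.eq_zero_or_pos j with rfl | hj
    · simp [PP_zero]
    · rw [PP_zero, coeff_one, if_neg (by omega)]
      simp
  | cons u R ih =>
    rw [Multiset.map_cons, Multiset.sum_cons, PP_cons]
    have hexp : (X - C u) * PP R = X * PP R - C u * PP R := by ring
    rcases j with _ | j
    · have h0c : ((X - C u) * PP R).coeff 0 = -(u * (PP R).coeff 0) := by
        rw [mul_coeff_zero]
        simp [coeff_X_zero]
      rw [h0c, C_neg, μ.map_neg, C_mul, μ.map_mul]
      simp only [zero_smul, add_zero]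
      have h0 := ih 0
      simp only [zero_smul, add_zero] at h0
      exact add_le_add (min_le_right _ _) h0
    · rw [hexp, coeff_sub, coeff_X_mul, coeff_C_mul, C_sub, C_mul]
      apply le_mu_sub_add
      · calc min (μ (X - C a)) (μ (C u)) + (R.map fun u => min (μ (X - C a)) (μ (C u))).sum
            ≤ μ (X - C a) + (μ (C ((PP R).coeff j)) + j • μ (X - C a)) :=
              add_le_add (min_le_left _ _) (ih j)
        _ = μ (C ((PP R).coeff j)) + (j + 1) • μ (X - C a) := by
              rw [succ_nsmul]; abel
      · calc min (μ (X - C a)) (μ (C u)) + (R.map fun u => min (μ (X - C a)) (μ (C u))).sum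
            ≤ μ (C u) + (μ (C ((PP R).coeff (j+1))) + (j+1) • μ (X - C a)) :=
              add_le_add (min_le_right _ _) (ih (j+1))
        _ = μ (C u * C ((PP R).coeff (j+1))) + (j+1) • μ (X - C a) := by
              rw [μ.map_mul, add_assoc]

theorem muC_eval_PP (R : Multiset L) :
    μ (C (eval a (PP R))) = (R.map fun s => μ (C (a - s))).sum := by
  induction R using Multiset.induction_on with
  | empty => simp [PP_zero]
  | cons s R ih =>
    rw [PP_cons, eval_mul, Multiset.map_cons, Multiset.sum_cons, ← ih, C_mul, μ.map_mul]
    congr 1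
    simp

end Coeffs

section Trunc

variable {K' : Type*} [Field K'] (w : AddValuation (Polynomial K') (WithTop Γ))

theorem qCoeff_eq {q : Polynomial K'} (hq : q.Monic) (f : Polynomial K') (i : ℕ) :
    qCoeff q f i = f /ₘ q ^ i %ₘ q := by
  rw [qCoeff, divByMonic_eq_div _ (hq.pow i), modByMonic_eq_mod _ hq]

theorem qCoeff_eq_zero {q f : Polynomial K'} (hq : q.Monic) {i : ℕ}
    (h : f.natDegree < i * q.natDegree) : qCoeff q f i = 0 := by
  rw [qCoeff_eq hq]
  rcases eq_or_ne f 0 with rfl | hf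
  · rw [zero_divByMonic, zero_modByMonic]
  · have : f /ₘ q ^ i = 0 := by
      rw [Polynomial.divByMonic_eq_zero_iff (hq.pow i)]
      calc degree f = (f.natDegree : WithBot ℕ) := degree_eq_natDegree hf
      _ < ((i * q.natDegree : ℕ) : WithBot ℕ) := by exact_mod_cast h
      _ = degree (q ^ i) := by
            rw [degree_eq_natDegree (hq.pow i).ne_zero, hq.natDegree_pow]
    rw [this, zero_modByMonic]

theorem qCoeff_zero' {q : Polynomial K'} (hq : q.Monic) (f : Polynomial K') :
    qCoeff q f 0 = f %ₘ q := by
  rw [qCoeff_eq hq, pow_zero, divByMonic_one]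

theorem qCoeff_succ {q : Polynomial K'} (hq : q.Monic) (f : Polynomial K') (i : ℕ) :
    qCoeff q f (i + 1) = qCoeff q (f /ₘ q) i := by
  rw [qCoeff_eq hq, qCoeff_eq hq]
  congr 1
  -- f /ₘ q ^ (i+1) = (f /ₘ q) /ₘ q ^ i
  have hsum : (q * ((f /ₘ q) %ₘ q ^ i) + f %ₘ q) + q ^ (i+1) * ((f /ₘ q) /ₘ q ^ i) = f := by
    have h1 : f %ₘ q + q * (f /ₘ q) = f := modByMonic_add_div f q
    have h2 : (f /ₘ q) %ₘ q ^ i + q ^ i * ((f /ₘ q) /ₘ q ^ i) = f /ₘ q :=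
      modByMonic_add_div _ (q ^ i)
    calc q * ((f /ₘ q) %ₘ q ^ i) + f %ₘ q + q ^ (i+1) * ((f /ₘ q) /ₘ q ^ i)
        = f %ₘ q + q * ((f /ₘ q) %ₘ q ^ i + q ^ i * ((f /ₘ q) /ₘ q ^ i)) := by ring
    _ = f := by rw [h2, h1]
  have hdeg : degree (q * ((f /ₘ q) %ₘ q ^ i) + f %ₘ q) < degree (q ^ (i+1)) := by
    have hd1 : degree (q * ((f /ₘ q) %ₘ q ^ i)) < degree (q ^ (i+1)) := by
      rcases eq_or_ne ((f /ₘ q) %ₘ q ^ i) 0 with hz | hz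
      · rw [hz, mul_zero, degree_zero]
        exact bot_lt_iff_ne_bot.2 (degree_eq_natDegree (hq.pow (i+1)).ne_zero ▸ (by
          exact WithBot.coe_ne_bot))
      · rw [degree_mul, pow_succ', degree_mul]
        exact WithBot.add_lt_add_left (degree_eq_natDegree hq.ne_zero ▸ WithBot.coe_ne_bot)
          (degree_modByMonic_lt _ (hq.pow i))
    have hd2 : degree (f %ₘ q) < degree (q ^ (i+1)) := by
      calc degree (f %ₘ q) < degree q := degree_modByMonic_lt _ hq
      _ ≤ degree (q ^ (i+1)) := by
            rw [degree_eq_natDegree (hq.pow (i+1)).ne_zero, degree_eq_natDegree hq.ne_zero,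
              hq.natDegree_pow]
            exact_mod_cast Nat.le_mul_of_pos_left _ (by omega)
    calc degree (q * ((f /ₘ q) %ₘ q ^ i) + f %ₘ q)
        ≤ max (degree (q * ((f /ₘ q) %ₘ q ^ i))) (degree (f %ₘ q)) := degree_add_le _ _
    _ < degree (q ^ (i+1)) := max_lt hd1 hd2
  exact (Polynomial.div_modByMonic_unique ((f /ₘ q) /ₘ q ^ i)
    (q * ((f /ₘ q) %ₘ q ^ i) + f %ₘ q) (hq.pow (i+1)) ⟨hsum, hdeg⟩).1

theorem trunc_eq_inf {q : Polynomial K'} (hq : q.Monic) (hq1 : 1 ≤ q.natDegree)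
    (f : Polynomial K') {N : ℕ} (hN : f.natDegree ≤ N) :
    trunc ⇑w q f = (Finset.range (N+1)).inf fun i => w (qCoeff q f i * q ^ i) := by
  rw [trunc]
  exact inf_pad hN _ fun i hi => by
    rw [qCoeff_eq_zero hq (lt_of_lt_of_le hi (Nat.le_mul_of_pos_right _ (by omega))),
      zero_mul, w.map_zero]

theorem trunc_zero_eq (q : Polynomial K') : trunc ⇑w q 0 = ⊤ := by
  rw [trunc]
  refine le_antisymm le_top (Finset.le_inf fun i _ => ?_)
  rw [qCoeff, EuclideanDomain.zero_div, EuclideanDomain.zero_mod, zero_mul, w.map_zero]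

theorem trunc_low {q f : Polynomial K'} (hq : q.Monic) (hq1 : 1 ≤ q.natDegree)
    (hfq : f.natDegree < q.natDegree) : trunc ⇑w q f = w f := by
  rw [trunc, inf_range_succ_shift]
  have h2 : ((Finset.range f.natDegree).inf fun i =>
      w (qCoeff q f (i + 1) * q ^ (i + 1))) = ⊤ := by
    refine le_antisymm le_top (Finset.le_inf fun i _ => ?_)
    rw [qCoeff_eq_zero hq (by
      calc f.natDegree < q.natDegree := hfq
      _ ≤ (i+1) * q.natDegree := Nat.le_mul_of_pos_left _ (by omega)), zero_mul, w.map_zero]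
  rw [h2, inf_top_eq, pow_zero, mul_one, qCoeff_zero' hq,
    (modByMonic_eq_self_iff hq).2 ?_]
  calc degree f ≤ (f.natDegree : WithBot ℕ) := degree_le_natDegree
  _ < (q.natDegree : WithBot ℕ) := by exact_mod_cast hfq
  _ = degree q := (degree_eq_natDegree hq.ne_zero).symm

theorem trunc_rec {q f : Polynomial K'} (hq : q.Monic) (hq1 : 1 ≤ q.natDegree)
    (hf : q.natDegree ≤ f.natDegree) :
    trunc ⇑w q f = min (w (f %ₘ q)) (trunc ⇑w q (f /ₘ q) + w q) := by
  have hN1 : 1 ≤ f.natDegree := le_trans hq1 hf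
  rw [trunc_eq_inf w hq hq1 f (le_refl f.natDegree), inf_range_succ_shift]
  congr 1
  · rw [pow_zero, mul_one, qCoeff_zero' hq]
  · have hrw : ∀ i, w (qCoeff q f (i+1) * q ^ (i+1)) =
        w (qCoeff q (f /ₘ q) i * q ^ i) + w q := by
      intro i
      rw [qCoeff_succ hq, pow_succ, ← mul_assoc, w.map_mul]
    have hne : (Finset.range f.natDegree).Nonempty := ⟨0, Finset.mem_range.2 (by omega)⟩
    calc ((Finset.range f.natDegree).inf fun i => w (qCoeff q f (i+1) * q ^ (i+1)))
        = (Finset.range f.natDegree).inf fun i => w (qCoeff q (f /ₘ q) i * q ^ i) + w q := by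
          exact Finset.inf_congr rfl fun i _ => hrw i
    _ = ((Finset.range f.natDegree).inf fun i => w (qCoeff q (f /ₘ q) i * q ^ i)) + w q :=
          (inf_add_const hne _ _).symm
    _ = trunc ⇑w q (f /ₘ q) + w q := by
          congr 1
          obtain ⟨M, hM⟩ : ∃ M, f.natDegree = M + 1 := ⟨f.natDegree - 1, by omega⟩
          rw [hM, ← trunc_eq_inf w hq hq1 _ (by
            rw [natDegree_divByMonic f hq]; omega)]

end Trunc

section Om

variable {L : Type*} [Field L] (μ : AddValuation (Polynomial L) (WithTop Γ)) (a : L)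

theorem le_mu_sum_add {ι : Type*} {s : Finset ι} (f : ι → Polynomial L) {c t : WithTop Γ}
    (h : ∀ x ∈ s, t ≤ μ (f x) + c) : t ≤ μ (∑ x ∈ s, f x) + c := by
  classical
  induction s using Finset.induction_on with
  | empty => simp
  | insert _ _ hx ih =>
    rw [Finset.sum_insert hx]
    exact le_mu_add_add μ (h _ (Finset.mem_insert_self _ _))
      (ih fun x hx' => h x (Finset.mem_insert_of_mem hx'))

theorem qCoeff_linear (h : Polynomial L) (j : ℕ) :
    qCoeff (X - C a) h j = C ((taylor a h).coeff j) := by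
  induction j generalizing h with
  | zero => rw [qCoeff_zero' (monic_X_sub_C a), modByMonic_X_sub_C_eq_C_eval, taylor_coeff_zero]
  | succ j ih =>
    rw [qCoeff_succ (monic_X_sub_C a), ih]
    congr 1
    have hdm : (X - C a) * (h /ₘ (X - C a)) + C (eval a h) = h := by
      have h0 := modByMonic_add_div h (X - C a)
      rw [modByMonic_X_sub_C_eq_C_eval] at h0
      calc (X - C a) * (h /ₘ (X - C a)) + C (eval a h)
          = C (eval a h) + (X - C a) * (h /ₘ (X - C a)) := by ring
      _ = h := h0
    have hta : taylor a h = X * taylor a (h /ₘ (X - C a)) + C (eval a h) := by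
      conv_lhs => rw [← hdm]
      rw [map_add, taylor_mul, taylor_C]
      congr 2
      rw [map_sub, taylor_X, taylor_C]
      ring
    rw [hta, coeff_add, coeff_X_mul, coeff_C, if_neg (by omega), add_zero]

theorem om_eq_inf (h : Polynomial L) {N : ℕ} (hN : h.natDegree ≤ N) :
    trunc ⇑μ (X - C a) h = (Finset.range (N+1)).inf fun j =>
      μ (C ((taylor a h).coeff j)) + j • μ (X - C a) := by
  rw [trunc_eq_inf μ (monic_X_sub_C a) (by simp) h hN]
  refine Finset.inf_congr rfl fun j _ => ?_
  rw [qCoeff_linear, μ.map_mul, μ.map_pow]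

theorem om_le_term (h : Polynomial L) (j : ℕ) :
    trunc ⇑μ (X - C a) h ≤ μ (C ((taylor a h).coeff j)) + j • μ (X - C a) := by
  rcases le_or_gt j h.natDegree with hj | hj
  · rw [om_eq_inf μ a h (le_refl _)]
    exact Finset.inf_le (Finset.mem_range.2 (by omega))
  · rw [coeff_eq_zero_of_natDegree_lt (by rw [natDegree_taylor]; exact hj), C_0,
      μ.map_zero, top_add]
    exact le_top

theorem om_le_mu (h : Polynomial L) : trunc ⇑μ (X - C a) h ≤ μ h := by
  conv_rhs => rw [← sum_taylor_eq h a]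
  rw [Polynomial.sum]
  refine μ.map_le_sum fun j _ => ?_
  calc trunc ⇑μ (X - C a) h ≤ μ (C ((taylor a h).coeff j)) + j • μ (X - C a) :=
    om_le_term μ a h j
  _ = μ (C ((taylor a h).coeff j) * (X - C a) ^ j) := by rw [μ.map_mul, μ.map_pow]

theorem om_superadd (u v : Polynomial L) :
    min (trunc ⇑μ (X - C a) u) (trunc ⇑μ (X - C a) v) ≤ trunc ⇑μ (X - C a) (u + v) := by
  rw [om_eq_inf μ a (u + v) (le_trans (natDegree_add_le u v) (le_refl _))]
  refine Finset.le_inf fun j _ => ?_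
  have hco : C ((taylor a (u + v)).coeff j) =
      C ((taylor a u).coeff j) + C ((taylor a v).coeff j) := by
    rw [map_add, coeff_add, C_add]
  rw [hco]
  exact le_mu_add_add μ (le_trans (min_le_left _ _) (om_le_term μ a u j))
    (le_trans (min_le_right _ _) (om_le_term μ a v j))

theorem om_ne_top (hγ : μ (X - C a) ≠ ⊤) {h : Polynomial L} (hh : h ≠ 0) :
    trunc ⇑μ (X - C a) h ≠ ⊤ := by
  have h1 : taylor a h ≠ 0 := fun he => hh (taylor_injective a (by rw [he, map_zero]))
  have hT : (taylor a h).coeff h.natDegree ≠ 0 := by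
    rw [← natDegree_taylor h a]
    exact mt leadingCoeff_eq_zero.1 h1
  exact ne_top_of_le_ne_top
    (WithTop.add_ne_top.2 ⟨muC_ne_top μ hT, wt_nsmul_ne_top hγ _⟩)
    (om_le_term μ a h h.natDegree)

theorem om_witness (hγ : μ (X - C a) ≠ ⊤) {h : Polynomial L} (hh : h ≠ 0) :
    ∃ j, (μ (C ((taylor a h).coeff j)) + j • μ (X - C a) = trunc ⇑μ (X - C a) h) ∧
      ∀ k < j, trunc ⇑μ (X - C a) h < μ (C ((taylor a h).coeff k)) + k • μ (X - C a) := by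
  classical
  set F := fun j => μ (C ((taylor a h).coeff j)) + j • μ (X - C a) with hF
  obtain ⟨i, hi, hie⟩ := Finset.exists_mem_eq_inf (Finset.range (h.natDegree + 1))
    ⟨0, by simp⟩ F
  set A := (Finset.range (h.natDegree + 1)).filter (fun j => F j = trunc ⇑μ (X - C a) h)
    with hA
  have hAne : A.Nonempty := ⟨i, Finset.mem_filter.2 ⟨hi, by
    rw [← hie, ← om_eq_inf μ a h (le_refl _)]⟩⟩
  refine ⟨A.min' hAne, (Finset.mem_filter.1 (A.min'_mem hAne)).2, fun k hk => ?_⟩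
  have hkr : k ∈ Finset.range (h.natDegree + 1) := by
    have := Finset.mem_range.1 (Finset.mem_filter.1 (A.min'_mem hAne)).1
    exact Finset.mem_range.2 (by omega)
  have hne : F k ≠ trunc ⇑μ (X - C a) h := by
    intro he
    exact absurd (A.min'_le k (Finset.mem_filter.2 ⟨hkr, he⟩)) (by omega)
  exact (om_le_term μ a h k).lt_of_ne (Ne.symm hne)

theorem om_mul_ge (h1 h2 : Polynomial L) :
    trunc ⇑μ (X - C a) h1 + trunc ⇑μ (X - C a) h2 ≤ trunc ⇑μ (X - C a) (h1 * h2) := by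
  rw [om_eq_inf μ a (h1 * h2) (le_refl _)]
  refine Finset.le_inf fun j _ => ?_
  have hco : C ((taylor a (h1 * h2)).coeff j) = ∑ x ∈ Finset.HasAntidiagonal.antidiagonal j,
      C ((taylor a h1).coeff x.1) * C ((taylor a h2).coeff x.2) := by
    rw [taylor_mul, coeff_mul, map_sum]
    simp [C_mul]
  rw [hco]
  refine le_mu_sum_add μ _ fun x hx => ?_
  have hxsum : x.1 + x.2 = j := Finset.HasAntidiagonal.mem_antidiagonal.1 hx
  calc trunc ⇑μ (X - C a) h1 + trunc ⇑μ (X - C a) h2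
      ≤ (μ (C ((taylor a h1).coeff x.1)) + x.1 • μ (X - C a)) +
        (μ (C ((taylor a h2).coeff x.2)) + x.2 • μ (X - C a)) :=
        add_le_add (om_le_term μ a h1 x.1) (om_le_term μ a h2 x.2)
  _ = μ (C ((taylor a h1).coeff x.1) * C ((taylor a h2).coeff x.2)) + j • μ (X - C a) := by
        rw [μ.map_mul, ← hxsum, add_nsmul]; abel

theorem om_mul_witness (hγ : μ (X - C a) ≠ ⊤) {h1 h2 : Polynomial L}
    (hh1 : h1 ≠ 0) (hh2 : h2 ≠ 0) :
    ∃ j, μ (C ((taylor a (h1 * h2)).coeff j)) + j • μ (X - C a) =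
        trunc ⇑μ (X - C a) h1 + trunc ⇑μ (X - C a) h2 ∧
      ((taylor a h1).coeff 0 = 0 → 1 ≤ j) := by
  classical
  obtain ⟨l1, hl1, hl1'⟩ := om_witness μ a hγ hh1
  obtain ⟨l2, hl2, hl2'⟩ := om_witness μ a hγ hh2
  have homs : trunc ⇑μ (X - C a) h1 + trunc ⇑μ (X - C a) h2 ≠ ⊤ :=
    WithTop.add_ne_top.2 ⟨om_ne_top μ a hγ hh1, om_ne_top μ a hγ hh2⟩
  refine ⟨l1 + l2, ?_, fun h0 => ?_⟩
  · have hmem : (l1, l2) ∈ Finset.HasAntidiagonal.antidiagonal (l1 + l2) :=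
      Finset.HasAntidiagonal.mem_antidiagonal.2 rfl
    have hco : C ((taylor a (h1 * h2)).coeff (l1 + l2)) = ∑ x ∈ Finset.HasAntidiagonal.antidiagonal (l1 + l2),
        C ((taylor a h1).coeff x.1) * C ((taylor a h2).coeff x.2) := by
      rw [taylor_mul, coeff_mul, map_sum]
      simp [C_mul]
    rw [hco, ← Finset.add_sum_erase _ _ hmem]
    have hmainv : μ (C ((taylor a h1).coeff l1) * C ((taylor a h2).coeff l2))
        + (l1 + l2) • μ (X - C a) =
        trunc ⇑μ (X - C a) h1 + trunc ⇑μ (X - C a) h2 := by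
      rw [μ.map_mul, add_nsmul, ← hl1, ← hl2]; abel
    have hAne : μ (C ((taylor a h1).coeff l1) * C ((taylor a h2).coeff l2)) ≠ ⊤ := by
      intro he
      rw [he, top_add] at hmainv
      exact homs hmainv.symm
    have hrest : μ (C ((taylor a h1).coeff l1) * C ((taylor a h2).coeff l2)) <
        μ (∑ x ∈ (Finset.HasAntidiagonal.antidiagonal (l1 + l2)).erase (l1, l2),
          C ((taylor a h1).coeff x.1) * C ((taylor a h2).coeff x.2)) := by
      refine μ.map_lt_sum hAne fun x hx => ?_
      obtain ⟨hx1, hx2⟩ := Finset.mem_erase.1 hx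
      have hsum : x.1 + x.2 = l1 + l2 := Finset.HasAntidiagonal.mem_antidiagonal.1 hx2
      have hcase : x.1 < l1 ∨ x.2 < l2 := by
        by_contra hc
        push_neg at hc
        exact hx1 (Prod.ext (by omega) (by omega))
      have key : trunc ⇑μ (X - C a) h1 + trunc ⇑μ (X - C a) h2 <
          (μ (C ((taylor a h1).coeff x.1)) + x.1 • μ (X - C a)) +
          (μ (C ((taylor a h2).coeff x.2)) + x.2 • μ (X - C a)) := by
        rcases hcase with hc | hc
        · exact wt_add_lt_add (om_ne_top μ a hγ hh1) (om_ne_top μ a hγ hh2)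
            (hl1' x.1 hc) (om_le_term μ a h2 x.2)
        · rw [add_comm (trunc ⇑μ (X - C a) h1), add_comm (μ (C ((taylor a h1).coeff x.1))
            + x.1 • μ (X - C a))]
          exact wt_add_lt_add (om_ne_top μ a hγ hh2) (om_ne_top μ a hγ hh1)
            (hl2' x.2 hc) (om_le_term μ a h1 x.1)
      have key2 : μ (C ((taylor a h1).coeff l1) * C ((taylor a h2).coeff l2))
          + (l1 + l2) • μ (X - C a) <
          μ (C ((taylor a h1).coeff x.1) * C ((taylor a h2).coeff x.2))
          + (l1 + l2) • μ (X - C a) := by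
        rw [hmainv]
        calc trunc ⇑μ (X - C a) h1 + trunc ⇑μ (X - C a) h2 < _ := key
        _ = μ (C ((taylor a h1).coeff x.1) * C ((taylor a h2).coeff x.2))
            + (l1 + l2) • μ (X - C a) := by
              rw [μ.map_mul, ← hsum, add_nsmul]; abel
      exact lt_of_add_lt_add_right key2
    rw [μ.map_add_eq_of_lt_left hrest, hmainv]
  · by_contra hj
    have hl1z : l1 = 0 := by omega
    rw [hl1z, h0, C_0, μ.map_zero, zero_smul, top_add] at hl1
    exact om_ne_top μ a hγ hh1 hl1.symm

end Om

section Glue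

variable {K'' : Type*} [Field K''] {L : Type*} [Field L]

theorem map_hasseDeriv (φ : K'' →+* L) (n : ℕ) (p : Polynomial K'') :
    (hasseDeriv n p).map φ = hasseDeriv n (p.map φ) := by
  ext k
  rw [coeff_map, hasseDeriv_coeff, hasseDeriv_coeff, coeff_map, map_mul, map_natCast]

variable (μ : AddValuation (Polynomial L) (WithTop Γ)) (a : L)

theorem mu_fact [IsAlgClosed L] {h : Polynomial L} (hh : h ≠ 0) :
    h = C h.leadingCoeff * PP h.roots :=
  (IsAlgClosed.splits h).eq_prod_roots

theorem om_eq_mu_of_roots_le [IsAlgClosed L] {h : Polynomial L} (hh : h ≠ 0)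
    (hroots : ∀ s ∈ h.roots, μ (X - C s) ≤ μ (X - C a)) :
    trunc ⇑μ (X - C a) h = μ h := by
  refine le_antisymm (om_le_mu μ a h) ?_
  rw [om_eq_inf μ a h (le_refl _)]
  refine Finset.le_inf fun j _ => ?_
  have hlc : h.leadingCoeff ≠ 0 := leadingCoeff_ne_zero.2 hh
  have htay : taylor a h = C h.leadingCoeff * PP (h.roots.map fun s => s - a) := by
    conv_lhs => rw [mu_fact hh]
    rw [taylor_mul, taylor_C, taylor_PP]
  have hcoeff : (taylor a h).coeff j = h.leadingCoeff * (PP (h.roots.map fun s => s - a)).coeff j := by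
    rw [htay, coeff_C_mul]
  have hbound := coeff_PP_bound μ a (h.roots.map fun s => s - a) j
  have hsum : ((h.roots.map fun s => s - a).map fun u => min (μ (X - C a)) (μ (C u))).sum =
      μ (PP h.roots) := by
    rw [Multiset.map_map, mu_PP]
    congr 1
    apply Multiset.map_congr rfl
    intro s hs
    have h1 : μ (C (s - a)) = μ (C (a - s)) := by
      rw [show (C (s - a) : Polynomial L) = C s - C a by rw [C_sub],
        μ.map_sub_swap, ← C_sub]
    simp only [Function.comp_apply]
    rw [h1, min_muC_of_le μ a (hroots s hs)]
  rw [hsum] at hbound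
  calc μ h = μ (C h.leadingCoeff) + μ (PP h.roots) := by
        conv_lhs => rw [mu_fact hh]
        rw [μ.map_mul]
  _ ≤ μ (C h.leadingCoeff) + (μ (C ((PP (h.roots.map fun s => s - a)).coeff j))
        + j • μ (X - C a)) := add_le_add_right hbound _
  _ = μ (C ((taylor a h).coeff j)) + j • μ (X - C a) := by
        rw [hcoeff, C_mul, μ.map_mul, add_assoc]

theorem muC_eval_eq_mu_of_roots_lt [IsAlgClosed L] {h : Polynomial L} (hh : h ≠ 0)
    (hroots : ∀ s ∈ h.roots, μ (X - C s) < μ (X - C a)) :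
    μ (C (eval a h)) = μ h := by
  have hlc : h.leadingCoeff ≠ 0 := leadingCoeff_ne_zero.2 hh
  conv_rhs => rw [mu_fact hh]
  conv_lhs => rw [mu_fact hh]
  rw [eval_mul, eval_C, C_mul, μ.map_mul, μ.map_mul, muC_eval_PP]
  congr 1
  rw [mu_PP]
  congr 1
  apply Multiset.map_congr rfl
  intro s hs
  exact muC_amb_of_lt μ a (hroots s hs)

end Glue

end Stmt19Aux

open Stmt19Aux

/-- For a key polynomial `Q` of `ν` and an optimizing root `a` of `Q`,
the restriction of `μ_{x-a}` to `K[x]` is the truncation `ν_Q`. -/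
theorem stmt19 {L : Type*} [Field L] [Algebra K L] [IsAlgClosure K L]
    (ν : AddValuation (Polynomial K) (WithTop Γ)) (μ : AddValuation (Polynomial L) (WithTop Γ))
    (hKrull : ∀ p : Polynomial K, p ≠ 0 → ν p ≠ ⊤)
    (hext : ∀ p : Polynomial K, ν p = μ (p.map (algebraMap K L)))
    (Q : Polynomial K) (hQ : IsKeyPoly (⇑ν) Q)
    (a : L) (ha : Polynomial.aeval a Q = 0)
    (hopt : ∀ b : L, Polynomial.aeval b Q = 0 → μ (X - C b) ≤ μ (X - C a)) :
    ∀ f : Polynomial K,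
      trunc (⇑ν) Q f = trunc (⇑μ) (X - C a) (f.map (algebraMap K L)) := by
  classical
  haveI : IsAlgClosed L := IsAlgClosure.isAlgClosed K
  have hQm : Q.Monic := hQ.1
  have hQ0 : Q ≠ 0 := hQm.ne_zero
  have hinj : Function.Injective (algebraMap K L) := (algebraMap K L).injective
  have hQd1 : 1 ≤ Q.natDegree := by
    by_contra hcon
    have h0 : Q = 1 := hQm.natDegree_eq_zero.1 (by omega)
    rw [h0] at ha
    simp at ha
  have hγne : μ (X - C a) ≠ ⊤ := by
    have hint : IsIntegral K a := Algebra.IsIntegral.isIntegral a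
    have hp0 : minpoly K a ≠ 0 := minpoly.ne_zero hint
    have hdvd : (X - C a) ∣ (minpoly K a).map (algebraMap K L) := by
      rw [dvd_iff_isRoot, IsRoot, eval_map, ← aeval_def]
      exact minpoly.aeval K a
    obtain ⟨u, hu⟩ := hdvd
    intro htop
    have hne := hKrull _ hp0
    rw [hext _, hu, μ.map_mul, htop, top_add] at hne
    exact hne rfl
  have hQroots : ∀ s ∈ (Q.map (algebraMap K L)).roots, μ (X - C s) ≤ μ (X - C a) := by
    intro s hs
    apply hopt
    have hroot := isRoot_of_mem_roots hs
    rw [aeval_def, ← eval_map]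
    exact hroot
  have hmapQ0 : Q.map (algebraMap K L) ≠ 0 := (Polynomial.map_ne_zero_iff hinj).2 hQ0
  -- ### the key lemma, using the key polynomial property
  have L2 : ∀ h : Polynomial K, h ≠ 0 → h.natDegree < Q.natDegree →
      ∀ s ∈ (h.map (algebraMap K L)).roots, μ (X - C s) < μ (X - C a) := by
    intro h hh hdeg c hc
    by_contra hlt
    push_neg at hlt
    set F := h.map (algebraMap K L) with hF
    have hF0 : F ≠ 0 := (Polynomial.map_ne_zero_iff hinj).2 hh
    have hlc : F.leadingCoeff ≠ 0 := leadingCoeff_ne_zero.2 hF0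
    set H := F.roots.filter (fun s => μ (X - C a) ≤ μ (X - C s)) with hHdef
    set S := F.roots.filter (fun s => ¬ μ (X - C a) ≤ μ (X - C s)) with hSdef
    have hHS : H + S = F.roots := Multiset.filter_add_not _ _
    have hH : ∀ s ∈ H, μ (X - C a) ≤ μ (X - C s) := fun s hs => (Multiset.mem_filter.1 hs).2
    have hS : ∀ s ∈ S, μ (X - C s) < μ (X - C a) :=
      fun s hs => not_le.1 (Multiset.mem_filter.1 hs).2
    have hcH : c ∈ H := Multiset.mem_filter.2 ⟨hc, hlt⟩
    set m := Multiset.card H with hm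
    have hm1 : 1 ≤ m := by
      have hne : H ≠ 0 := fun h0 => by
        rw [h0] at hcH; exact absurd hcH (Multiset.notMem_zero c)
      have := Multiset.card_pos.2 hne
      omega
    have hmdeg : m ≤ h.natDegree := by
      calc m ≤ Multiset.card F.roots := Multiset.card_le_card
              (by rw [← hHS]; exact Multiset.le_add_right _ _)
      _ ≤ F.natDegree := F.card_roots'
      _ = h.natDegree := natDegree_map_eq_of_injective hinj h
    obtain ⟨ph1, ph2⟩ := phi μ a hγne H S hH hS
    have hPPr : PP H * PP S = PP F.roots := by rw [← PP_add, hHS]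
    have hFfact : F = C F.leadingCoeff * (PP H * PP S) := by
      rw [hPPr]; exact mu_fact hF0
    have hdF : hasseDeriv m F = C F.leadingCoeff * hasseDeriv m (PP H * PP S) := by
      conv_lhs => rw [hFfact]
      rw [← smul_eq_C_mul, ← smul_eq_C_mul, map_smul]
    have hμdF : μ (hasseDeriv m F) = μ (C F.leadingCoeff) + μ (PP S) := by
      rw [hdF, μ.map_mul, ph1]
    have hVge : m • μ (X - C a) ≤ μ (PP H) := by
      rw [mu_PP, hm, ← Multiset.card_map (fun s => μ (X - C s)) H]
      exact Multiset.card_nsmul_le_sum fun x hx => by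
        obtain ⟨s, hs, rfl⟩ := Multiset.mem_map.1 hx
        exact hH s hs
    have hmuF : μ F = μ (C F.leadingCoeff) + (μ (PP H) + μ (PP S)) := by
      conv_lhs => rw [hFfact]
      rw [μ.map_mul, μ.map_mul]
    have hνd : ν (hasseDeriv m h) = μ (hasseDeriv m F) := by
      rw [hext _, map_hasseDeriv]
    have hA : ν (hasseDeriv m h) + m • μ (X - C a) ≤ ν h := by
      rw [hνd, hμdF, hext h, ← hF, hmuF]
      calc μ (C F.leadingCoeff) + μ (PP S) + m • μ (X - C a)
          ≤ μ (C F.leadingCoeff) + μ (PP S) + μ (PP H) := add_le_add_right hVge _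
      _ = μ (C F.leadingCoeff) + (μ (PP H) + μ (PP S)) := by abel
    have hνdne : ν (hasseDeriv m h) ≠ ⊤ := by
      rw [hνd, hμdF]
      exact WithTop.add_ne_top.2 ⟨muC_ne_top μ hlc, mu_PP_ne_top μ hS⟩
    have hB : ∀ i : ℕ, ν Q ≤ ν (hasseDeriv i Q) + i • μ (X - C a) := by
      intro i
      set FQ := Q.map (algebraMap K L) with hFQ
      set HQ := FQ.roots.filter (fun s => μ (X - C a) ≤ μ (X - C s)) with hHQ
      set SQ := FQ.roots.filter (fun s => ¬ μ (X - C a) ≤ μ (X - C s)) with hSQ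
      have hHSQ : HQ + SQ = FQ.roots := Multiset.filter_add_not _ _
      have hHQ' : ∀ s ∈ HQ, μ (X - C a) ≤ μ (X - C s) :=
        fun s hs => (Multiset.mem_filter.1 hs).2
      have hSQ' : ∀ s ∈ SQ, μ (X - C s) < μ (X - C a) :=
        fun s hs => not_le.1 (Multiset.mem_filter.1 hs).2
      obtain ⟨phQ1, phQ2⟩ := phi μ a hγne HQ SQ hHQ' hSQ'
      have hPPrQ : PP HQ * PP SQ = PP FQ.roots := by rw [← PP_add, hHSQ]
      have hlcQ : FQ.leadingCoeff = 1 := (hQm.map (algebraMap K L)).leadingCoeff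
      have hFQfact : FQ = PP HQ * PP SQ := by
        rw [hPPrQ]
        conv_lhs => rw [mu_fact hmapQ0]
        rw [hlcQ, C_1, one_mul]
      have hVQ : μ (PP HQ) = Multiset.card HQ • μ (X - C a) := by
        rw [mu_PP]
        have hconst : ∀ x ∈ HQ.map (fun s => μ (X - C s)), x = μ (X - C a) := by
          intro x hx
          obtain ⟨s, hs, rfl⟩ := Multiset.mem_map.1 hx
          exact le_antisymm (hQroots s (Multiset.mem_of_mem_filter hs)) (hHQ' s hs)
        calc (HQ.map fun s => μ (X - C s)).sum
            = (Multiset.replicate (Multiset.card HQ) (μ (X - C a))).sum := by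
              congr 1
              rw [Multiset.eq_replicate]
              exact ⟨by rw [Multiset.card_map], hconst⟩
        _ = Multiset.card HQ • μ (X - C a) := Multiset.sum_replicate _ _
      have hνQ : ν Q = μ (PP SQ) + Multiset.card HQ • μ (X - C a) := by
        rw [hext Q, ← hFQ]
        conv_lhs => rw [hFQfact]
        rw [μ.map_mul, hVQ, add_comm]
      have hνdQ : ν (hasseDeriv i Q) = μ (hasseDeriv i (PP HQ * PP SQ)) := by
        rw [hext _, map_hasseDeriv, ← hFQ, ← hFQfact]
      rw [hνQ, hνdQ]
      exact phQ2 i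
    have hnotgen : ¬ IsGenSupp ⇑ν Q := by
      intro hg
      exact hKrull Q hQ0 ((hg Q).2 dvd_rfl)
    have heps : EpsGE ⇑ν h Q := by
      refine Or.inr ⟨hnotgen, Or.inr ⟨m, ⟨hm1, hmdeg, hKrull h hh, hνdne⟩, ?_⟩⟩
      intro c' _
      unfold RatioLE
      calc m • ν Q + c' • ν (hasseDeriv m h)
          ≤ m • (ν (hasseDeriv c' Q) + c' • μ (X - C a)) + c' • ν (hasseDeriv m h) :=
            add_le_add_left (nsmul_le_nsmul_right (hB c') m) _
      _ = m • ν (hasseDeriv c' Q) + c' • (ν (hasseDeriv m h) + m • μ (X - C a)) := by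
            rw [smul_add, smul_add, smul_smul, smul_smul, Nat.mul_comm]
            abel
      _ ≤ m • ν (hasseDeriv c' Q) + c' • ν h := add_le_add_right (nsmul_le_nsmul_right hA c') _
      _ = c' • ν h + m • ν (hasseDeriv c' Q) := add_comm _ _
    exact absurd (hQ.2 h hh heps) (by omega)
  -- ### om agrees with ν on K-polynomials with small roots
  have OME : ∀ h : Polynomial K, h ≠ 0 →
      (∀ s ∈ (h.map (algebraMap K L)).roots, μ (X - C s) ≤ μ (X - C a)) →
      trunc ⇑μ (X - C a) (h.map (algebraMap K L)) = ν h := by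
    intro h hh hr
    rw [om_eq_mu_of_roots_le μ a ((Polynomial.map_ne_zero_iff hinj).2 hh) hr, ← hext]
  have hsmall : ∀ h : Polynomial K, h.natDegree < Q.natDegree →
      trunc ⇑ν Q h = trunc ⇑μ (X - C a) (h.map (algebraMap K L)) := by
    intro h hdeg
    rcases eq_or_ne h 0 with rfl | hh
    · rw [Polynomial.map_zero, trunc_zero_eq, trunc_zero_eq]
    · rw [trunc_low ν hQm hQd1 hdeg,
        OME h hh fun s hs => (L2 h hh hdeg s hs).le]
  have MAIN : ∀ n : ℕ, ∀ h : Polynomial K, h.natDegree ≤ n →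
      trunc ⇑ν Q h = trunc ⇑μ (X - C a) (h.map (algebraMap K L)) := by
    intro n
    induction n with
    | zero => exact fun h hd => hsmall h (by omega)
    | succ n ihn =>
      intro h hd
      rcases lt_or_ge h.natDegree Q.natDegree with hdeg | hdeg
      · exact hsmall h hdeg
      · have hh : h ≠ 0 := by
          intro h0
          rw [h0, natDegree_zero] at hdeg
          omega
        set g := h /ₘ Q with hgdef
        set r := h %ₘ Q with hrdef
        have hg0 : g ≠ 0 := by
          intro h0
          have hlt := (divByMonic_eq_zero_iff hQm).1 h0
          rw [degree_eq_natDegree hh, degree_eq_natDegree hQ0] at hlt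
          exact absurd (by exact_mod_cast hlt) (not_lt.2 hdeg)
        have hgd : g.natDegree ≤ n := by
          rw [hgdef, natDegree_divByMonic h hQm]; omega
        have ihg := ihn g hgd
        have hrec := trunc_rec ν hQm hQd1 hdeg
        have homQ : trunc ⇑μ (X - C a) (Q.map (algebraMap K L)) = ν Q := OME Q hQ0 hQroots
        have hmapg0 : g.map (algebraMap K L) ≠ 0 := (Polynomial.map_ne_zero_iff hinj).2 hg0
        have homg_ne : trunc ⇑μ (X - C a) (g.map (algebraMap K L)) ≠ ⊤ :=
          om_ne_top μ a hγne hmapg0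
        have hνQne : ν Q ≠ ⊤ := hKrull Q hQ0
        have hrdeg : ∀ (hr0 : r ≠ 0), r.natDegree < Q.natDegree := fun hr0 =>
          natDegree_lt_natDegree hr0 (hrdef ▸ degree_modByMonic_lt h hQm)
        have homr : trunc ⇑μ (X - C a) (r.map (algebraMap K L)) = ν r := by
          rcases eq_or_ne r 0 with hr0 | hr0
          · rw [hr0, Polynomial.map_zero, trunc_zero_eq, ν.map_zero]
          · exact OME r hr0 fun s hs => (L2 r hr0 (hrdeg hr0) s hs).le
        have hmapf : h.map (algebraMap K L) = r.map (algebraMap K L) +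
            Q.map (algebraMap K L) * g.map (algebraMap K L) := by
          conv_lhs => rw [← modByMonic_add_div h Q]
          rw [Polynomial.map_add, Polynomial.map_mul]
        have hge : min (ν r) (trunc ⇑μ (X - C a) (g.map (algebraMap K L)) + ν Q) ≤
            trunc ⇑μ (X - C a) (h.map (algebraMap K L)) := by
          rw [hmapf]
          refine le_trans (le_min ?_ ?_) (om_superadd μ a _ _)
          · rw [← homr]
            exact min_le_left _ _
          · refine le_trans (min_le_right _ _) ?_
            calc trunc ⇑μ (X - C a) (g.map (algebraMap K L)) + ν Q
                = ν Q + trunc ⇑μ (X - C a) (g.map (algebraMap K L)) := add_comm _ _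
            _ = trunc ⇑μ (X - C a) (Q.map (algebraMap K L)) +
                trunc ⇑μ (X - C a) (g.map (algebraMap K L)) := by rw [homQ]
            _ ≤ _ := om_mul_ge μ a _ _
        have hle : trunc ⇑μ (X - C a) (h.map (algebraMap K L)) ≤
            min (ν r) (trunc ⇑μ (X - C a) (g.map (algebraMap K L)) + ν Q) := by
          rcases le_or_gt (ν r) (trunc ⇑μ (X - C a) (g.map (algebraMap K L)) + ν Q)
            with hc1 | hc2
          · rw [min_eq_left hc1]
            have hr0 : r ≠ 0 := by
              intro h0
              rw [h0, ν.map_zero] at hc1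
              exact (WithTop.add_ne_top.2 ⟨homg_ne, hνQne⟩) (top_le_iff.1 hc1)
            have h0eval : (taylor a (h.map (algebraMap K L))).coeff 0 =
                eval a (r.map (algebraMap K L)) := by
              rw [taylor_coeff_zero, hmapf, eval_add, eval_mul]
              have hQa : eval a (Q.map (algebraMap K L)) = 0 := by
                rw [eval_map, ← aeval_def, ha]
              rw [hQa, zero_mul, add_zero]
            calc trunc ⇑μ (X - C a) (h.map (algebraMap K L))
                ≤ μ (C ((taylor a (h.map (algebraMap K L))).coeff 0)) + 0 • μ (X - C a) :=
                  om_le_term μ a _ 0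
            _ = μ (C (eval a (r.map (algebraMap K L)))) := by rw [h0eval, zero_smul, add_zero]
            _ = μ (r.map (algebraMap K L)) := muC_eval_eq_mu_of_roots_lt μ a
                  ((Polynomial.map_ne_zero_iff hinj).2 hr0)
                  (fun s hs => L2 r hr0 (hrdeg hr0) s hs)
            _ = ν r := (hext r).symm
          · rw [min_eq_right hc2.le]
            obtain ⟨j, hj, hj1⟩ := om_mul_witness μ a hγne hmapQ0 hmapg0
            have hj1' : 1 ≤ j := hj1 (by rw [taylor_coeff_zero, eval_map, ← aeval_def, ha])
            rw [homQ] at hj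
            have hTsplit : (taylor a (h.map (algebraMap K L))).coeff j =
                (taylor a (Q.map (algebraMap K L) * g.map (algebraMap K L))).coeff j +
                (taylor a (r.map (algebraMap K L))).coeff j := by
              rw [hmapf, map_add, coeff_add, add_comm]
            have hrbound : ν r ≤
                μ (C ((taylor a (r.map (algebraMap K L))).coeff j)) + j • μ (X - C a) := by
              rw [← homr]
              exact om_le_term μ a _ j
            have hlt2 : μ (C ((taylor a (Q.map (algebraMap K L) *
                g.map (algebraMap K L))).coeff j)) <
                μ (C ((taylor a (r.map (algebraMap K L))).coeff j)) := by
              have step : μ (C ((taylor a (Q.map (algebraMap K L) *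
                  g.map (algebraMap K L))).coeff j)) + j • μ (X - C a) <
                  μ (C ((taylor a (r.map (algebraMap K L))).coeff j)) + j • μ (X - C a) := by
                rw [hj]
                calc ν Q + trunc ⇑μ (X - C a) (g.map (algebraMap K L))
                    = trunc ⇑μ (X - C a) (g.map (algebraMap K L)) + ν Q := add_comm _ _
                _ < ν r := hc2
                _ ≤ _ := hrbound
              exact lt_of_add_lt_add_right step
            calc trunc ⇑μ (X - C a) (h.map (algebraMap K L))
                ≤ μ (C ((taylor a (h.map (algebraMap K L))).coeff j)) + j • μ (X - C a) :=
                  om_le_term μ a _ j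
            _ = μ (C ((taylor a (Q.map (algebraMap K L) * g.map (algebraMap K L))).coeff j))
                + j • μ (X - C a) := by
                  rw [hTsplit, C_add, μ.map_add_eq_of_lt_left hlt2]
            _ = ν Q + trunc ⇑μ (X - C a) (g.map (algebraMap K L)) := hj
            _ = trunc ⇑μ (X - C a) (g.map (algebraMap K L)) + ν Q := add_comm _ _
        rw [hrec, ihg]
        exact le_antisymm hge hle
  exact fun f => MAIN f.natDegree f le_rfl
end
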